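/- arXiv:1606.06581 — 4 statements merged into one kernel-verified Lean document; each statement's English description precedes it below -/
import Mathlib

section
/- (Adding an apex.) Let G = (V,E) be a finite simple graph with edge weights w_e (e ∈ E) and vertex weights z_v (v ∈ V) in a commutative ring. Let G' be the graph obtained from G by adding one new vertex a (the apex) joined to every vertex v ∈ V by an edge of weight z_v. Then the multivariate forest polynomial of G' satisfies F(G') = Σ_{A ∈ 𝔽(G)} ( ∏_{e ∈ A} w_e ) · ∏_{T ∈ c(A)} ( 1 + Σ_{v ∈ T} z_v ). -/
open scoped Classical

/-- An edge subset is acyclic (a forest) if the spanning subgraph `(V, A)` has no cycle. -/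
def IsForestEdgeSet {V : Type*} (A : Finset (Sym2 V)) : Prop :=
  (SimpleGraph.fromEdgeSet (A : Set (Sym2 V))).IsAcyclic

/-- The collection `c(A)` of vertex sets of the connected components of a graph `H` on a
finite vertex set (including singleton components). -/
noncomputable def componentSets {V : Type*} [Fintype V] (H : SimpleGraph V) :
    Finset (Finset V) :=
  Finset.univ.image (fun v => Finset.univ.filter (fun u => H.Reachable v u))

/-- The apex graph `G'` of `G`: a new vertex `a = none` is joined to every vertex of `G`. -/
def apexGraph {V : Type*} (G : SimpleGraph V) : SimpleGraph (Option V) :=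
  SimpleGraph.fromRel (fun x y =>
    match x, y with
    | some u, some v => G.Adj u v
    | none, some _ => True
    | _, _ => False)

section Aux

variable {V : Type*}

lemma apexGraph_adj_some_some (G : SimpleGraph V) (u v : V) :
    (apexGraph G).Adj (some u) (some v) ↔ G.Adj u v := by
  simp only [apexGraph, SimpleGraph.fromRel_adj]
  constructor
  · rintro ⟨h, h2 | h2⟩
    · exact h2
    · exact h2.symm
  · intro h
    exact ⟨by simpa using h.ne, Or.inl h⟩

lemma apexGraph_adj_none_some (G : SimpleGraph V) (v : V) :
    (apexGraph G).Adj none (some v) := by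
  simp only [apexGraph, SimpleGraph.fromRel_adj]
  exact ⟨by simp, Or.inl trivial⟩

lemma apexGraph_not_adj_none_none (G : SimpleGraph V) : ¬ (apexGraph G).Adj none none :=
  (apexGraph G).irrefl

lemma apexGraph_edge_form (G : SimpleGraph V) (e : Sym2 (Option V))
    (he : e ∈ (apexGraph G).edgeSet) :
    (∃ u v, e = s(some u, some v) ∧ G.Adj u v) ∨ ∃ v, e = s(none, some v) := by
  induction e using Sym2.ind with
  | _ x y =>
    rw [SimpleGraph.mem_edgeSet] at he
    match x, y with
    | some u, some v => exact Or.inl ⟨u, v, rfl, (apexGraph_adj_some_some G u v).1 he⟩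
    | none, some v => exact Or.inr ⟨v, rfl⟩
    | some u, none => exact Or.inr ⟨u, Sym2.eq_swap⟩
    | none, none => exact absurd he (apexGraph_not_adj_none_none G)

lemma none_not_mem_map_some (e : Sym2 V) : (none : Option V) ∉ Sym2.map some e := by
  induction e using Sym2.ind with
  | _ x y => simp [Sym2.mem_map]

/-- The edge set of `G'` corresponding to a pair `(A, S)`. -/
noncomputable def Apre (A : Finset (Sym2 V)) (S : Finset V) : Finset (Sym2 (Option V)) :=
  A.image (Sym2.map some) ∪ S.image (fun v => s(none, some v))

lemma mem_Apre_map_some (A : Finset (Sym2 V)) (S : Finset V) (e : Sym2 V) :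
    Sym2.map some e ∈ Apre A S ↔ e ∈ A := by
  simp only [Apre, Finset.mem_union, Finset.mem_image]
  constructor
  · rintro (⟨e', he', h⟩ | ⟨v, hv, h⟩)
    · rwa [← Sym2.map.injective (Option.some_injective V) h]
    · exact absurd (h ▸ none_not_mem_map_some e) (by simp)
  · intro h; exact Or.inl ⟨e, h, rfl⟩

lemma mem_Apre_apex (A : Finset (Sym2 V)) (S : Finset V) (v : V) :
    s(none, some v) ∈ Apre A S ↔ v ∈ S := by
  simp only [Apre, Finset.mem_union, Finset.mem_image]
  constructor
  · rintro (⟨e', he', h⟩ | ⟨u, hu, h⟩)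
    · exact absurd (h ▸ Sym2.mem_mk_left none (some v)) (none_not_mem_map_some e')
    · rw [Sym2.eq_iff] at h
      rcases h with ⟨h1, h2⟩ | ⟨h1, h2⟩
      · rwa [← Option.some_injective V h2]
      · simp at h2
  · intro h; exact Or.inr ⟨v, h, rfl⟩

lemma Apre_adj_some_some (A : Finset (Sym2 V)) (S : Finset V) (u v : V) :
    (SimpleGraph.fromEdgeSet (↑(Apre A S) : Set (Sym2 (Option V)))).Adj (some u) (some v) ↔
      s(u, v) ∈ A ∧ u ≠ v := by
  rw [SimpleGraph.fromEdgeSet_adj]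
  simp only [Finset.mem_coe, ne_eq, Option.some.injEq]
  rw [show s(some u, some v) = Sym2.map some s(u,v) from (Sym2.map_pair_eq _ _ _).symm,
    mem_Apre_map_some]

lemma Apre_adj_none_some (A : Finset (Sym2 V)) (S : Finset V) (v : V) :
    (SimpleGraph.fromEdgeSet (↑(Apre A S) : Set (Sym2 (Option V)))).Adj none (some v) ↔ v ∈ S := by
  rw [SimpleGraph.fromEdgeSet_adj]
  simp [mem_Apre_apex]

lemma fromEdgeSet_finset_adj (A : Finset (Sym2 V)) (u v : V) :
    (SimpleGraph.fromEdgeSet (↑A : Set (Sym2 V))).Adj u v ↔ s(u, v) ∈ A ∧ u ≠ v := by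
  rw [SimpleGraph.fromEdgeSet_adj]; simp

/-- Transfer a walk avoiding the apex back down to `G`. -/
lemma down_walk (A : Finset (Sym2 V)) (S : Finset V) :
    ∀ {x y : Option V} (p : (SimpleGraph.fromEdgeSet (↑(Apre A S) : Set (Sym2 (Option V)))).Walk x y),
      none ∉ p.support → ∀ u v : V, x = some u → y = some v →
      ∃ q : (SimpleGraph.fromEdgeSet (↑A : Set (Sym2 V))).Walk u v,
        q.edges.map (Sym2.map some) = p.edges ∧ q.support.map some = p.support := by
  intro x y p
  induction p with
  | nil =>
    intro _ u v hx hy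
    subst hx
    obtain rfl : u = v := Option.some_injective V hy
    exact ⟨SimpleGraph.Walk.nil, by simp, by simp⟩
  | @cons a b c h p ih =>
    intro hnone u v hx hy
    subst hx
    simp only [SimpleGraph.Walk.support_cons, List.mem_cons] at hnone
    push_neg at hnone
    obtain ⟨-, hnone'⟩ := hnone
    obtain ⟨m, rfl⟩ : ∃ m, b = some m := by
      cases b with
      | none => exact absurd (SimpleGraph.Walk.start_mem_support p) (by simpa using hnone')
      | some m => exact ⟨m, rfl⟩
    obtain ⟨q, hq1, hq2⟩ := ih hnone' m v rfl hy
    have hadj : (SimpleGraph.fromEdgeSet (↑A : Set (Sym2 V))).Adj u m := by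
      rw [fromEdgeSet_finset_adj]
      rw [Apre_adj_some_some] at h
      exact h
    refine ⟨SimpleGraph.Walk.cons hadj q, ?_, ?_⟩
    · simp [hq1, Sym2.map_pair_eq]
    · simp [hq2]

/-- `S` hits each component of `A` at most once. -/
def ValidS (A : Finset (Sym2 V)) (S : Finset V) : Prop :=
  ∀ u ∈ S, ∀ v ∈ S, (SimpleGraph.fromEdgeSet (↑A : Set (Sym2 V))).Reachable u v → u = v

lemma down_reachable {A : Finset (Sym2 V)} {S : Finset V} {u v : V}
    (p : (SimpleGraph.fromEdgeSet (↑(Apre A S) : Set (Sym2 (Option V)))).Walk (some u) (some v))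
    (hnone : none ∉ p.support) :
    (SimpleGraph.fromEdgeSet (↑A : Set (Sym2 V))).Reachable u v := by
  obtain ⟨q, -, -⟩ := down_walk A S p hnone u v rfl rfl
  exact ⟨q⟩

/-- The upward homomorphism. -/
noncomputable def upHom (A : Finset (Sym2 V)) (S : Finset V) :
    SimpleGraph.fromEdgeSet (↑A : Set (Sym2 V)) →g
      SimpleGraph.fromEdgeSet (↑(Apre A S) : Set (Sym2 (Option V))) where
  toFun := some
  map_rel' := by
    intro u v h
    rw [fromEdgeSet_finset_adj] at h
    rw [Apre_adj_some_some]
    exact h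

lemma forest_Apre_iff (A : Finset (Sym2 V)) (S : Finset V) :
    IsForestEdgeSet (Apre A S) ↔ IsForestEdgeSet A ∧ ValidS A S := by
  constructor
  · intro hF
    constructor
    · -- forests project down
      intro v c hc
      exact hF (c.map (upHom A S)) (hc.map (Option.some_injective V))
    · -- S hits each component at most once
      intro u hu v hv hreach
      by_contra hne
      obtain ⟨p⟩ := hreach
      have hp : p.toPath.1.IsPath := p.toPath.2
      set p0 := p.toPath.1 with hp0
      -- map the path up
      have hP : (p0.map (upHom A S)).IsPath :=
        p0.map_isPath_of_injective (Option.some_injective V) hp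
      set P := p0.map (upHom A S) with hP0
      have hPsupp : P.support = p0.support.map some := by
        rw [hP0, SimpleGraph.Walk.support_map]; rfl
      have hPedges : P.edges = p0.edges.map (Sym2.map some) := by
        rw [hP0, SimpleGraph.Walk.edges_map]; rfl
      have hnoneP : (none : Option V) ∉ P.support := by
        rw [hPsupp]; simp
      have h1 : (SimpleGraph.fromEdgeSet (↑(Apre A S) : Set (Sym2 (Option V)))).Adj
          none ((upHom A S) u) := (Apre_adj_none_some A S u).2 hu
      have h2 : (SimpleGraph.fromEdgeSet (↑(Apre A S) : Set (Sym2 (Option V)))).Adj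
          ((upHom A S) v) none := ((Apre_adj_none_some A S v).2 hv).symm
      set q := SimpleGraph.Walk.cons h1 (P.concat h2) with hq
      have hqc : q.IsCycle := by
        rw [SimpleGraph.Walk.isCycle_def]
        refine ⟨?_, by simp [hq], ?_⟩
        · rw [SimpleGraph.Walk.isTrail_def, hq]
          rw [SimpleGraph.Walk.edges_cons, SimpleGraph.Walk.edges_concat]
          have hne1 : s(none, some u) ∉ P.edges := by
            intro hmem
            rw [hPedges] at hmem
            obtain ⟨e, -, he⟩ := List.mem_map.1 hmem
            exact none_not_mem_map_some e (he ▸ Sym2.mem_mk_left _ _)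
          have hne2 : s(some v, none) ∉ P.edges := by
            intro hmem
            rw [hPedges] at hmem
            obtain ⟨e, -, he⟩ := List.mem_map.1 hmem
            exact none_not_mem_map_some e (he ▸ Sym2.mem_mk_right _ _)
          have hne3 : s((none : Option V), some u) ≠ s(some v, none) := by
            intro h
            rw [Sym2.eq_iff] at h
            rcases h with ⟨h1, h2⟩ | ⟨h1, h2⟩ <;> simp_all
          rw [List.concat_eq_append, List.nodup_cons, List.mem_append]
          refine ⟨?_, ?_⟩
          · push_neg
            refine ⟨hne1, ?_⟩
            simp only [List.mem_singleton]
            exact hne3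
          · rw [List.nodup_append]
            refine ⟨hP.1.edges_nodup, List.nodup_singleton _, ?_⟩
            intro a ha b hb hab
            rw [List.mem_singleton] at hb
            subst hb hab
            exact hne2 ha
        · rw [hq, SimpleGraph.Walk.support_cons, List.tail_cons,
            SimpleGraph.Walk.support_concat, List.nodup_append]
          exact ⟨hP.2, List.nodup_singleton _, fun a ha b hb hab => hnoneP (by
            rw [List.mem_singleton] at hb; subst hb hab; exact ha)⟩
      exact hF q hqc
  · rintro ⟨hA, hS⟩
    intro x c hc
    by_cases hn : (none : Option V) ∈ c.support
    · -- rotate so the cycle is based at the apex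
      have hc' := hc.rotate hn
      set q0 := c.rotate none hn with hq0
      clear_value q0
      cases q0 with
      | nil => exact absurd rfl hc'.ne_nil
      | @cons _ b _ h1 q' =>
        obtain ⟨u, rfl⟩ : ∃ u, b = some u := by
          cases b with
          | none => exact absurd h1 ((SimpleGraph.fromEdgeSet _).irrefl)
          | some u => exact ⟨u, rfl⟩
        have hu : u ∈ S := (Apre_adj_none_some A S u).1 h1
        -- q' : Walk (some u) none ; peel the last edge via reverse
        have hq'nodup : q'.support.Nodup := by
          have := hc'.2
          rwa [SimpleGraph.Walk.support_cons, List.tail_cons] at this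
        obtain ⟨z, h2, r, hr⟩ :=
          SimpleGraph.Walk.exists_eq_cons_of_ne (by simp : (none : Option V) ≠ some u)
            q'.reverse
        obtain ⟨m, rfl⟩ : ∃ m, z = some m := by
          cases z with
          | none => exact absurd h2 ((SimpleGraph.fromEdgeSet _).irrefl)
          | some m => exact ⟨m, rfl⟩
        have hm : m ∈ S := (Apre_adj_none_some A S m).1 h2
        have hrevnodup : q'.reverse.support.Nodup := by
          rw [SimpleGraph.Walk.support_reverse]
          exact List.nodup_reverse.2 hq'nodup
        rw [hr, SimpleGraph.Walk.support_cons, List.nodup_cons] at hrevnodup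
        obtain ⟨hnr, hrn⟩ := hrevnodup
        -- transfer r down, use validity
        have : m = u := hS m hm u hu (down_reachable r hnr)
        subst this
        have hrpath : r.IsPath := SimpleGraph.Walk.IsPath.mk' hrn
        have hrnil : r = SimpleGraph.Walk.nil := by
          have := SimpleGraph.Path.loop_eq ⟨r, hrpath⟩
          simpa [SimpleGraph.Path.nil] using congrArg Subtype.val this
        have hlen : q'.length = 1 := by
          have : q'.reverse.length = 1 := by rw [hr, hrnil]; simp
          rwa [SimpleGraph.Walk.length_reverse] at this
        have h3 := hc'.three_le_length
        rw [SimpleGraph.Walk.length_cons, hlen] at h3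
        omega
    · -- cycle avoiding the apex: transfer it down
      obtain ⟨u, rfl⟩ : ∃ u, x = some u := by
        cases x with
        | none => exact absurd c.start_mem_support hn
        | some u => exact ⟨u, rfl⟩
      obtain ⟨q, hq1, hq2⟩ := down_walk A S c hn u u rfl rfl
      have hqc : q.IsCycle := by
        rw [SimpleGraph.Walk.isCycle_def]
        refine ⟨?_, ?_, ?_⟩
        · rw [SimpleGraph.Walk.isTrail_def]
          have := hc.1.1.edges_nodup
          rw [← hq1] at this
          exact this.of_map _
        · intro h
          subst h
          have h3 := hc.three_le_length
          have : c.edges = [] := by rw [← hq1]; simp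
          have hl := c.length_edges
          rw [this] at hl
          simp at hl
          omega
        · have := hc.2
          rw [← hq2, ← List.map_tail] at this
          exact this.of_map _
      exact hA q hqc

variable [Fintype V]

noncomputable def restr (G : SimpleGraph V) (A' : Finset (Sym2 (Option V))) : Finset (Sym2 V) :=
  G.edgeFinset.filter (fun e => Sym2.map some e ∈ A')

noncomputable def apexS [Fintype V] (A' : Finset (Sym2 (Option V))) : Finset V :=
  Finset.univ.filter (fun v => s(none, some v) ∈ A')

lemma Apre_subset_edgeFinset (G : SimpleGraph V) {A : Finset (Sym2 V)} (S : Finset V)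
    (hA : A ⊆ G.edgeFinset) : Apre A S ⊆ (apexGraph G).edgeFinset := by
  intro e' he'
  rw [SimpleGraph.mem_edgeFinset]
  rcases Finset.mem_union.1 he' with h | h
  · obtain ⟨e, he, rfl⟩ := Finset.mem_image.1 h
    induction e using Sym2.ind with
    | _ u v =>
      rw [Sym2.map_pair_eq, SimpleGraph.mem_edgeSet, apexGraph_adj_some_some]
      exact SimpleGraph.mem_edgeFinset.1 (hA he)
  · obtain ⟨v, hv, rfl⟩ := Finset.mem_image.1 h
    rw [SimpleGraph.mem_edgeSet]
    exact apexGraph_adj_none_some G v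

lemma restr_Apre (G : SimpleGraph V) {A : Finset (Sym2 V)} (S : Finset V)
    (hA : A ⊆ G.edgeFinset) : restr G (Apre A S) = A := by
  ext e
  rw [restr, Finset.mem_filter, mem_Apre_map_some]
  exact ⟨fun h => h.2, fun h => ⟨hA h, h⟩⟩

lemma apexS_Apre (A : Finset (Sym2 V)) (S : Finset V) : apexS (Apre A S) = S := by
  ext v
  rw [apexS, Finset.mem_filter, mem_Apre_apex]
  simp

lemma Apre_restr_apexS (G : SimpleGraph V) {A' : Finset (Sym2 (Option V))}
    (hA' : A' ⊆ (apexGraph G).edgeFinset) : Apre (restr G A') (apexS A') = A' := by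
  ext e'
  constructor
  · intro he'
    rcases Finset.mem_union.1 he' with h | h
    · obtain ⟨e, he, rfl⟩ := Finset.mem_image.1 h
      exact (Finset.mem_filter.1 he).2
    · obtain ⟨v, hv, rfl⟩ := Finset.mem_image.1 h
      exact (Finset.mem_filter.1 hv).2
  · intro he'
    have := SimpleGraph.mem_edgeFinset.1 (hA' he')
    rcases apexGraph_edge_form G e' this with ⟨u, v, rfl, hadj⟩ | ⟨v, rfl⟩
    · rw [show s(some u, some v) = Sym2.map some s(u, v) from (Sym2.map_pair_eq _ _ _).symm] at he' ⊢
      rw [mem_Apre_map_some, restr, Finset.mem_filter]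
      exact ⟨SimpleGraph.mem_edgeFinset.2 hadj, he'⟩
    · rw [mem_Apre_apex, apexS, Finset.mem_filter]
      exact ⟨Finset.mem_univ v, he'⟩

lemma prod_Apre {R : Type*} [CommRing R] (A : Finset (Sym2 V)) (S : Finset V)
    (w : Sym2 V → R) (z : V → R) (W : Sym2 (Option V) → R)
    (hW1 : ∀ u v : V, W s(some u, some v) = w s(u, v))
    (hW2 : ∀ v : V, W s(none, some v) = z v) :
    ∏ e ∈ Apre A S, W e = (∏ e ∈ A, w e) * ∏ v ∈ S, z v := by
  rw [Apre, Finset.prod_union, Finset.prod_image, Finset.prod_image]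
  · congr 1
    · apply Finset.prod_congr rfl
      intro e _
      induction e using Sym2.ind with
      | _ u v => rw [Sym2.map_pair_eq, hW1]
    · exact Finset.prod_congr rfl fun v _ => hW2 v
  · intro u _ v _ h
    rw [Sym2.eq_iff] at h
    rcases h with ⟨h1, h2⟩ | ⟨h1, h2⟩ <;> simp_all
  · intro e _ e' _ h
    exact Sym2.map.injective (Option.some_injective V) h
  · rw [Finset.disjoint_left]
    intro e' h1 h2
    obtain ⟨e, -, rfl⟩ := Finset.mem_image.1 h1
    obtain ⟨v, -, hv⟩ := Finset.mem_image.1 h2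
    exact none_not_mem_map_some e (hv ▸ Sym2.mem_mk_left _ _)

section PartD
variable {R : Type*} [CommRing R]

lemma sum_card_le_one (T : Finset V) (z : V → R) :
    ∑ S ∈ T.powerset.filter (fun S => S.card ≤ 1), ∏ v ∈ S, z v = 1 + ∑ v ∈ T, z v := by
  have hset : T.powerset.filter (fun S => S.card ≤ 1)
      = insert ∅ (T.image fun v => ({v} : Finset V)) := by
    ext S
    simp only [Finset.mem_filter, Finset.mem_powerset, Finset.mem_insert, Finset.mem_image]
    constructor
    · rintro ⟨hsub, hcard⟩
      rcases Nat.le_one_iff_eq_zero_or_eq_one.1 hcard with h0 | h1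
      · exact Or.inl (Finset.card_eq_zero.1 h0)
      · obtain ⟨x, rfl⟩ := Finset.card_eq_one.1 h1
        exact Or.inr ⟨x, hsub (Finset.mem_singleton_self x), rfl⟩
    · rintro (rfl | ⟨v, hv, rfl⟩)
      · simp
      · simp [Finset.singleton_subset_iff.2 hv]
  rw [hset, Finset.sum_insert, Finset.sum_image]
  · simp
  · intro u _ v _ h
    exact Finset.singleton_injective h
  · simp only [Finset.mem_image, not_exists, not_and]
    intro v _ h
    exact Finset.singleton_ne_empty v h

lemma prod_one_add_partition (z : V → R) (P : Finset (Finset V))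
    (hdisj : (↑P : Set (Finset V)).Pairwise (fun a b => Disjoint a b)) :
    ∏ T ∈ P, (1 + ∑ v ∈ T, z v)
      = ∑ S ∈ (P.sup id).powerset.filter (fun S => ∀ T ∈ P, (S ∩ T).card ≤ 1),
          ∏ v ∈ S, z v := by
  induction P using Finset.induction_on with
  | empty => simp
  | @insert T P hT ih =>
    have hdisjP : (↑P : Set (Finset V)).Pairwise (fun a b => Disjoint a b) :=
      hdisj.mono (by simp [Set.subset_insert])
    have hTP : ∀ T' ∈ P, Disjoint T T' := fun T' hT' =>
      hdisj (by simp) (by simp [hT']) (by rintro rfl; exact hT hT')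
    have hTsup : Disjoint T (P.sup id) := by
      rw [Finset.disjoint_sup_right]
      exact fun T' hT' => hTP T' hT'
    rw [Finset.prod_insert hT, ih hdisjP, ← sum_card_le_one T z, Finset.sum_mul_sum,
      ← Finset.sum_product']
    have key1 : ∀ S₁ S₂ : Finset V, S₁ ⊆ T → S₂ ⊆ P.sup id → (S₁ ∪ S₂) ∩ T = S₁ := by
      intro S₁ S₂ h1 h2
      rw [Finset.union_inter_distrib_right, Finset.inter_eq_left.2 h1,
        Finset.disjoint_iff_inter_eq_empty.1 (hTsup.symm.mono_left h2), Finset.union_empty]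
    have key2 : ∀ S₁ S₂ : Finset V, S₁ ⊆ T → S₂ ⊆ P.sup id → (S₁ ∪ S₂) ∩ P.sup id = S₂ := by
      intro S₁ S₂ h1 h2
      rw [Finset.union_inter_distrib_right, Finset.inter_eq_left.2 h2,
        Finset.disjoint_iff_inter_eq_empty.1 (hTsup.mono_left h1), Finset.empty_union]
    have hsupins : (insert T P).sup id = T ∪ P.sup id := by
      rw [Finset.sup_insert]; rfl
    refine Finset.sum_nbij' (fun p => p.1 ∪ p.2) (fun S => (S ∩ T, S ∩ P.sup id))
      ?_ ?_ ?_ ?_ ?_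
    · rintro ⟨S₁, S₂⟩ hp
      simp only [Finset.mem_product, Finset.mem_filter, Finset.mem_powerset] at hp
      obtain ⟨⟨hS₁, hc₁⟩, hS₂, hc₂⟩ := hp
      simp only [Finset.mem_filter, Finset.mem_powerset]
      refine ⟨?_, ?_⟩
      · rw [hsupins]
        exact Finset.union_subset (hS₁.trans Finset.subset_union_left)
          (hS₂.trans Finset.subset_union_right)
      · intro T' hT'
        rcases Finset.mem_insert.1 hT' with rfl | hT'
        · rw [key1 S₁ S₂ hS₁ hS₂]; exact hc₁
        · have : (S₁ ∪ S₂) ∩ T' = S₂ ∩ T' := by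
            rw [Finset.union_inter_distrib_right,
              Finset.disjoint_iff_inter_eq_empty.1 ((hTP T' hT').mono_left hS₁),
              Finset.empty_union]
          rw [this]; exact hc₂ T' hT'
    · intro S hS
      simp only [Finset.mem_filter, Finset.mem_powerset, hsupins] at hS
      obtain ⟨hsub, hcond⟩ := hS
      simp only [Finset.mem_product, Finset.mem_filter, Finset.mem_powerset]
      refine ⟨⟨Finset.inter_subset_right, hcond T (Finset.mem_insert_self T P)⟩,
        Finset.inter_subset_right, ?_⟩
      intro T' hT'
      have : S ∩ P.sup id ∩ T' = S ∩ T' := by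
        rw [Finset.inter_assoc]
        congr 1
        exact Finset.inter_eq_right.2 (Finset.le_sup (f := id) hT')
      rw [this]
      exact hcond T' (Finset.mem_insert_of_mem hT')
    · rintro ⟨S₁, S₂⟩ hp
      simp only [Finset.mem_product, Finset.mem_filter, Finset.mem_powerset] at hp
      obtain ⟨⟨hS₁, -⟩, hS₂, -⟩ := hp
      simp only [Prod.mk.injEq]
      exact ⟨key1 S₁ S₂ hS₁ hS₂, key2 S₁ S₂ hS₁ hS₂⟩
    · intro S hS
      simp only [Finset.mem_filter, Finset.mem_powerset, hsupins] at hS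
      show S ∩ T ∪ S ∩ P.sup id = S
      rw [← Finset.inter_union_distrib_left]
      exact Finset.inter_eq_left.2 hS.1
    · rintro ⟨S₁, S₂⟩ hp
      simp only [Finset.mem_product, Finset.mem_filter, Finset.mem_powerset] at hp
      obtain ⟨⟨hS₁, -⟩, hS₂, -⟩ := hp
      exact (Finset.prod_union (hTsup.mono hS₁ hS₂)).symm

end PartD

section PartD2
variable {R : Type*} [CommRing R]

lemma prod_componentSets (H : SimpleGraph V) (z : V → R) :
    ∏ T ∈ componentSets H, (1 + ∑ v ∈ T, z v)
      = ∑ S ∈ Finset.univ.powerset.filter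
          (fun S => ∀ u ∈ S, ∀ v ∈ S, H.Reachable u v → u = v), ∏ v ∈ S, z v := by
  have hdisj : (↑(componentSets H) : Set (Finset V)).Pairwise (fun a b => Disjoint a b) := by
    intro T₁ h₁ T₂ h₂ hne
    simp only [componentSets, Finset.coe_image, Set.mem_image, Finset.mem_coe] at h₁ h₂
    obtain ⟨v₁, -, rfl⟩ := h₁
    obtain ⟨v₂, -, rfl⟩ := h₂
    rw [Finset.disjoint_left]
    intro u hu1 hu2
    simp only [Finset.mem_filter, Finset.mem_univ, true_and] at hu1 hu2
    apply hne
    ext x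
    simp only [Finset.mem_filter, Finset.mem_univ, true_and]
    exact ⟨fun h => (hu2.trans hu1.symm).trans h, fun h => (hu1.trans hu2.symm).trans h⟩
  have hsup : (componentSets H).sup id = Finset.univ := by
    apply Finset.eq_univ_of_forall
    intro v
    rw [Finset.mem_sup]
    refine ⟨Finset.univ.filter (fun u => H.Reachable v u),
      Finset.mem_image_of_mem _ (Finset.mem_univ v), ?_⟩
    simp only [id]
    simp [SimpleGraph.Reachable.refl]
  rw [prod_one_add_partition z _ hdisj, hsup]
  apply Finset.sum_congr
  · apply Finset.filter_congr
    intro S _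
    constructor
    · intro h u hu v hv hr
      have hcard := h _ (Finset.mem_image_of_mem
        (fun x => Finset.univ.filter (fun y => H.Reachable x y)) (Finset.mem_univ u))
      refine Finset.card_le_one.1 hcard u ?_ v ?_
      · simp only [Finset.mem_inter, Finset.mem_filter, Finset.mem_univ, true_and]
        exact ⟨hu, SimpleGraph.Reachable.refl u⟩
      · simp only [Finset.mem_inter, Finset.mem_filter, Finset.mem_univ, true_and]
        exact ⟨hv, hr⟩
    · intro h T hT
      obtain ⟨x, -, rfl⟩ := Finset.mem_image.1 hT
      apply Finset.card_le_one.2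
      intro a ha b hb
      simp only [Finset.mem_inter, Finset.mem_filter, Finset.mem_univ, true_and] at ha hb
      exact h a ha.1 b hb.1 (ha.2.symm.trans hb.2)
  · intros; rfl

end PartD2

end Aux

/-- **Adding an apex.**  Let `G = (V, E)` be a finite simple graph with edge weights `w_e`
and vertex weights `z_v` in a commutative ring, and let `G'` be obtained from `G` by adding
an apex `a` joined to each `v ∈ V` by an edge of weight `z_v` (the weight function `W` of `G'`
assigns `w e` to the edges of `G` and `z v` to the apex edge at `v`).  Then the multivariate
forest polynomial of `G'` satisfies
`F(G') = Σ_{A ∈ 𝔽(G)} (∏_{e ∈ A} w_e) · ∏_{T ∈ c(A)} (1 + Σ_{v ∈ T} z_v)`. -/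
theorem forest_polynomial_apex {V : Type*} [Fintype V] {R : Type*} [CommRing R]
    (G : SimpleGraph V) (w : Sym2 V → R) (z : V → R)
    (W : Sym2 (Option V) → R)
    (hW1 : ∀ u v : V, W s(some u, some v) = w s(u, v))
    (hW2 : ∀ v : V, W s(none, some v) = z v) :
    ∑ A' ∈ (apexGraph G).edgeFinset.powerset.filter IsForestEdgeSet, ∏ e ∈ A', W e
    = ∑ A ∈ G.edgeFinset.powerset.filter IsForestEdgeSet,
        (∏ e ∈ A, w e) *
          ∏ T ∈ componentSets (SimpleGraph.fromEdgeSet (A : Set (Sym2 V))),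
            (1 + ∑ v ∈ T, z v) := by
  have hrw : ∀ A ∈ G.edgeFinset.powerset.filter IsForestEdgeSet,
      (∏ e ∈ A, w e) *
          ∏ T ∈ componentSets (SimpleGraph.fromEdgeSet (A : Set (Sym2 V))),
            (1 + ∑ v ∈ T, z v)
      = ∑ S ∈ Finset.univ.powerset.filter
            (fun S => ∀ u ∈ S, ∀ v ∈ S,
              (SimpleGraph.fromEdgeSet (↑A : Set (Sym2 V))).Reachable u v → u = v),
          (∏ e ∈ A, w e) * ∏ v ∈ S, z v := by
    intro A _
    rw [prod_componentSets, Finset.mul_sum]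
    exact Finset.sum_congr (by ext; simp) (fun _ _ => rfl)
  rw [Finset.sum_congr rfl hrw, Finset.sum_sigma']
  refine Finset.sum_nbij' (fun A' => ⟨restr G A', apexS A'⟩) (fun x => Apre x.1 x.2)
    ?_ ?_ ?_ ?_ ?_
  · intro A' hA'
    rw [Finset.mem_filter, Finset.mem_powerset] at hA'
    obtain ⟨hsub, hfor⟩ := hA'
    rw [← Apre_restr_apexS G hsub] at hfor
    have h2 := (forest_Apre_iff _ _).1 hfor
    rw [Finset.mem_sigma, Finset.mem_filter, Finset.mem_powerset,
      Finset.mem_filter, Finset.mem_powerset]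
    exact ⟨⟨Finset.filter_subset _ _, h2.1⟩, Finset.subset_univ _, h2.2⟩
  · rintro ⟨A, S⟩ hx
    rw [Finset.mem_sigma, Finset.mem_filter, Finset.mem_powerset,
      Finset.mem_filter, Finset.mem_powerset] at hx
    obtain ⟨⟨hA, hfor⟩, -, hS⟩ := hx
    rw [Finset.mem_filter, Finset.mem_powerset]
    exact ⟨Apre_subset_edgeFinset G S hA, (forest_Apre_iff A S).2 ⟨hfor, hS⟩⟩
  · intro A' hA'
    rw [Finset.mem_filter, Finset.mem_powerset] at hA'
    exact Apre_restr_apexS G hA'.1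
  · rintro ⟨A, S⟩ hx
    rw [Finset.mem_sigma, Finset.mem_filter, Finset.mem_powerset] at hx
    simp only
    rw [restr_Apre G S hx.1.1, apexS_Apre]
  · intro A' hA'
    rw [Finset.mem_filter, Finset.mem_powerset] at hA'
    conv_lhs => rw [← Apre_restr_apexS G hA'.1]
    exact prod_Apre _ _ w z W hW1 hW2
end

section
/- (The forest polynomial under a k-stretch.) Let G = (V,E) be a finite simple graph with m edges, let k ≥ 2 be an integer, and let G' be the k-stretch of G. Let w be a real number with (w+1)^k − w^k ≠ 0. Then F(G'; w) = ((w+1)^k − w^k)^m · F(G; w^k / ((w+1)^k − w^k)), where F(H;x) = Σ_{A ∈ 𝔽(H)} x^{|A|} is the univariate forest polynomial evaluated at x. -/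
open scoped Classical

def stretchGraph {V : Type*} (G : SimpleGraph V) (k : ℕ) (p : G.edgeSet → V × V) :
    SimpleGraph (V ⊕ (G.edgeSet × Fin (k - 1))) :=
  SimpleGraph.fromRel (fun x y =>
    match x, y with
    | Sum.inl u, Sum.inr (e, i) =>
        (i.val = 0 ∧ u = (p e).1) ∨ (i.val = k - 2 ∧ u = (p e).2)
    | Sum.inr (e, i), Sum.inr (f, j) => e = f ∧ i.val + 1 = j.val
    | _, _ => False)

namespace StretchAux

open SimpleGraph Sum

variable {V : Type*} {G : SimpleGraph V} {k : ℕ} {p : G.edgeSet → V × V}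

/-- the `t`-th vertex along the stretched path of edge `e`, `0 ≤ t ≤ k`. -/
def gVert (p : G.edgeSet → V × V) (k : ℕ) (e : G.edgeSet) (t : ℕ) :
    V ⊕ (G.edgeSet × Fin (k - 1)) :=
  if h : t = 0 then Sum.inl (p e).1
  else if h2 : t < k then Sum.inr (e, ⟨t - 1, by omega⟩)
  else Sum.inl (p e).2

/-- the `t`-th edge along the stretched path of edge `e`, `0 ≤ t < k`. -/
def gEdge (p : G.edgeSet → V × V) (k : ℕ) (e : G.edgeSet) (t : ℕ) :
    Sym2 (V ⊕ (G.edgeSet × Fin (k - 1))) :=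
  s(gVert p k e t, gVert p k e (t + 1))

lemma gVert_zero (e : G.edgeSet) : gVert p k e 0 = Sum.inl (p e).1 := by simp [gVert]

lemma gVert_k (hk : 2 ≤ k) (e : G.edgeSet) : gVert p k e k = Sum.inl (p e).2 := by
  simp [gVert]; omega

lemma gVert_mid (e : G.edgeSet) {t : ℕ} (h1 : 1 ≤ t) (h2 : t < k) :
    gVert p k e t = Sum.inr (e, ⟨t - 1, by omega⟩) := by
  unfold gVert
  rw [dif_neg (by omega), dif_pos h2]

variable (hk : 2 ≤ k)

include hk in
lemma stretch_adj_gVert (e : G.edgeSet) {t : ℕ} (ht : t < k) :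
    (stretchGraph G k p).Adj (gVert p k e t) (gVert p k e (t + 1)) := by
  rw [stretchGraph, SimpleGraph.fromRel_adj]
  rcases Nat.eq_zero_or_pos t with rfl | hpos
  · rw [gVert_zero, gVert_mid e (by omega) (by omega)]
    exact ⟨by simp, Or.inl (Or.inl ⟨rfl, rfl⟩)⟩
  rcases eq_or_lt_of_le (Nat.succ_le_of_lt ht) with hek | hlt
  · have hek' : t + 1 = k := hek
    rw [hek', gVert_k hk, gVert_mid e (by omega) ht]
    refine ⟨by simp, Or.inr (Or.inr ⟨?_, rfl⟩)⟩
    simp; omega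
  · rw [gVert_mid e (by omega) ht, gVert_mid e (by omega) hlt]
    refine ⟨?_, Or.inl ⟨rfl, ?_⟩⟩
    · simp only [ne_eq, Sum.inr.injEq, Prod.mk.injEq, true_and]
      intro h; rw [Fin.ext_iff] at h; simp at h; omega
    · simp; omega

include hk in
lemma stretch_adj_iff {x y : V ⊕ (G.edgeSet × Fin (k - 1))} :
    (stretchGraph G k p).Adj x y ↔
      ∃ e t, t < k ∧ ((x = gVert p k e t ∧ y = gVert p k e (t + 1)) ∨
        (x = gVert p k e (t + 1) ∧ y = gVert p k e t)) := by
  constructor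
  · intro hadj
    rw [stretchGraph, SimpleGraph.fromRel_adj] at hadj
    have key : ∀ a b : V ⊕ (G.edgeSet × Fin (k - 1)),
        (match a, b with
          | Sum.inl u, Sum.inr (e, i) =>
              (i.val = 0 ∧ u = (p e).1) ∨ (i.val = k - 2 ∧ u = (p e).2)
          | Sum.inr (e, i), Sum.inr (f, j) => e = f ∧ i.val + 1 = j.val
          | _, _ => False) →
        ∃ e t, t < k ∧ ((a = gVert p k e t ∧ b = gVert p k e (t + 1)) ∨
          (a = gVert p k e (t + 1) ∧ b = gVert p k e t)) := by
      intro a b h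
      match a, b with
      | Sum.inl u, Sum.inr (e, i) =>
        rcases h with ⟨hi, hu⟩ | ⟨hi, hu⟩
        · refine ⟨e, 0, by omega, Or.inl ⟨?_, ?_⟩⟩
          · rw [gVert_zero, hu]
          · rw [gVert_mid e (by omega) (by omega)]
            subst hu; exact congrArg (fun n => Sum.inr (e, n)) (Fin.ext (by simp [hi])).symm
        · refine ⟨e, k - 1, by omega, Or.inr ⟨?_, ?_⟩⟩
          · have : k - 1 + 1 = k := by omega
            rw [this, gVert_k hk, hu]
          · rw [gVert_mid e (by omega) (by omega)]
            subst hu; exact congrArg (fun n => Sum.inr (e, n)) (Fin.ext (by simp <;> omega)).symm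
      | Sum.inr (e, i), Sum.inr (f, j) =>
        rcases h with ⟨rfl, hij⟩
        refine ⟨e, i.val + 1, by omega, Or.inl ⟨?_, ?_⟩⟩
        · rw [gVert_mid e (by omega) (by have := i.isLt; omega)]
          simp
        · rw [gVert_mid e (by omega) (by have := j.isLt; omega)]
          exact congrArg (fun n => Sum.inr (e, n)) (Fin.ext (by simp <;> omega)).symm
      | Sum.inl u, Sum.inl v => exact absurd h (by simp)
      | Sum.inr (e, i), Sum.inl u => exact absurd h (by simp)
    rcases hadj with ⟨hne, h | h⟩
    · exact key x y h
    · obtain ⟨e, t, ht, hor⟩ := key y x h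
      exact ⟨e, t, ht, hor.symm.imp And.symm And.symm⟩
  · rintro ⟨e, t, ht, ⟨rfl, rfl⟩ | ⟨rfl, rfl⟩⟩
    · exact stretch_adj_gVert hk e ht
    · exact (stretch_adj_gVert hk e ht).symm

include hk in
lemma mem_stretch_edgeSet {q : Sym2 (V ⊕ (G.edgeSet × Fin (k - 1)))} :
    q ∈ (stretchGraph G k p).edgeSet ↔ ∃ e t, t < k ∧ q = gEdge p k e t := by
  induction q using Sym2.ind with
  | _ x y =>
    rw [SimpleGraph.mem_edgeSet, stretch_adj_iff hk]
    constructor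
    · rintro ⟨e, t, ht, ⟨rfl, rfl⟩ | ⟨rfl, rfl⟩⟩
      · exact ⟨e, t, ht, rfl⟩
      · exact ⟨e, t, ht, Sym2.eq_swap⟩
    · rintro ⟨e, t, ht, hq⟩
      rw [gEdge, Sym2.eq_iff] at hq
      exact ⟨e, t, ht, hq⟩

include hk in
lemma gVert_eq_elim {e f : G.edgeSet} {a b : ℕ} (ha : a ≤ k) (hb : b ≤ k)
    (h : gVert p k e a = gVert p k f b) :
    (e = f ∧ a = b) ∨ ((a = 0 ∨ a = k) ∧ (b = 0 ∨ b = k)) := by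
  rcases Nat.eq_zero_or_pos a with rfl | hapos
  · rcases Nat.eq_zero_or_pos b with rfl | hbpos
    · exact Or.inr ⟨Or.inl rfl, Or.inl rfl⟩
    · rcases eq_or_lt_of_le hb with rfl | hbk
      · exact Or.inr ⟨Or.inl rfl, Or.inr rfl⟩
      · rw [gVert_zero, gVert_mid f hbpos hbk] at h
        exact absurd h (by simp)
  rcases eq_or_lt_of_le ha with rfl | hak
  · rcases Nat.eq_zero_or_pos b with rfl | hbpos
    · exact Or.inr ⟨Or.inr rfl, Or.inl rfl⟩
    rcases eq_or_lt_of_le hb with rfl | hbk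
    · exact Or.inr ⟨Or.inr rfl, Or.inr rfl⟩
    · rw [gVert_k hk, gVert_mid f hbpos hbk] at h
      exact absurd h (by simp)
  rcases Nat.eq_zero_or_pos b with rfl | hbpos
  · rw [gVert_zero, gVert_mid e hapos hak] at h
    exact absurd h (by simp)
  rcases eq_or_lt_of_le hb with rfl | hbk
  · rw [gVert_k hk, gVert_mid e hapos hak] at h
    exact absurd h (by simp)
  rw [gVert_mid e hapos hak, gVert_mid f hbpos hbk] at h
  simp only [Sum.inr.injEq, Prod.mk.injEq] at h
  refine Or.inl ⟨h.1, ?_⟩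
  have := congrArg Fin.val h.2
  simp at this
  omega

include hk in
lemma gVert_zero_ne_gVert_k (hpd : ∀ e : G.edgeSet, (p e).1 ≠ (p e).2) (e : G.edgeSet) :
    gVert p k e 0 ≠ gVert p k e k := by
  rw [gVert_zero, gVert_k hk]
  simpa using hpd e

include hk in
lemma gEdge_inj (hpd : ∀ e : G.edgeSet, (p e).1 ≠ (p e).2) {e f : G.edgeSet} {t s : ℕ}
    (ht : t < k) (hs : s < k) (h : gEdge p k e t = gEdge p k f s) : e = f ∧ t = s := by
  rcases Sym2.eq_iff.mp h with ⟨h1, h2⟩ | ⟨h1, h2⟩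
  · rcases gVert_eq_elim hk (by omega) (by omega) h1 with ⟨rfl, rfl⟩ | ⟨hta, htb⟩
    · exact ⟨rfl, rfl⟩
    · have ht0 : t = 0 := by omega
      have hs0 : s = 0 := by omega
      subst ht0; subst hs0
      rcases gVert_eq_elim hk (by omega) (by omega) h2 with ⟨rfl, _⟩ | ⟨hta2, htb2⟩
      · exact ⟨rfl, rfl⟩
      · omega
  · rcases gVert_eq_elim hk (by omega) (by omega) h1 with ⟨hef, hts⟩ | ⟨hta, htb⟩ <;>
      rcases gVert_eq_elim hk (by omega) (by omega) h2 with ⟨hef2, hts2⟩ | ⟨hta2, htb2⟩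
    · omega
    · exfalso
      subst hef
      apply gVert_zero_ne_gVert_k hk hpd e
      have h0 : s = 0 := by omega
      have hK : t + 1 = k := by omega
      rw [h0, hK] at h2; exact h2.symm
    · exfalso
      subst hef2
      apply gVert_zero_ne_gVert_k hk hpd e
      have h0 : t = 0 := by omega
      have hK : s + 1 = k := by omega
      rw [h0, hK] at h1; exact h1
    · omega

/-- All edges of the gadget of `e` with index in `[lo, hi]` lie in `C`. -/
def Seg (p : G.edgeSet → V × V) (k : ℕ) (C : Set (Sym2 (V ⊕ (G.edgeSet × Fin (k - 1)))))
    (e : G.edgeSet) (lo hi : ℕ) : Prop :=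
  ∀ t, lo ≤ t → t ≤ hi → gEdge p k e t ∈ C

/-- The set of original edges whose gadget is fully contained in `C`. -/
def fullSet (p : G.edgeSet → V × V) (k : ℕ)
    (C : Set (Sym2 (V ⊕ (G.edgeSet × Fin (k - 1))))) : Set (Sym2 V) :=
  {q | ∃ e : G.edgeSet, q = (e : Sym2 V) ∧ ∀ t, t < k → gEdge p k e t ∈ C}

/-- `Anch C x u` : `u` is an "anchor" of the stretch-vertex `x`: an original vertex
reachable from `x` along present gadget edges, with the corresponding gadget segment in `C`. -/
def Anch (p : G.edgeSet → V × V) (k : ℕ) (C : Set (Sym2 (V ⊕ (G.edgeSet × Fin (k - 1)))))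
    : (V ⊕ (G.edgeSet × Fin (k - 1))) → V → Prop
  | Sum.inl u', u => u' = u
  | Sum.inr (f, i), u =>
      (u = (p f).1 ∧ Seg p k C f 0 i.val) ∨ (u = (p f).2 ∧ Seg p k C f (i.val + 1) (k - 1))

variable {C : Set (Sym2 (V ⊕ (G.edgeSet × Fin (k - 1))))}

lemma anch_inl {w u : V} : Anch p k C (Sum.inl w) u ↔ w = u := Iff.rfl

lemma anch_inr {f : G.edgeSet} {i : Fin (k - 1)} {u : V} :
    Anch p k C (Sum.inr (f, i)) u ↔
      (u = (p f).1 ∧ Seg p k C f 0 i.val) ∨ (u = (p f).2 ∧ Seg p k C f (i.val + 1) (k - 1)) :=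
  Iff.rfl

lemma Seg.mono {e : G.edgeSet} {lo hi lo' hi' : ℕ} (h : Seg p k C e lo hi)
    (h1 : lo ≤ lo') (h2 : hi' ≤ hi) : Seg p k C e lo' hi' :=
  fun t ht1 ht2 => h t (by omega) (by omega)

lemma Seg.of_subset {e : G.edgeSet} {lo hi lo' hi' m : ℕ} (h : Seg p k C e lo hi)
    (hm : gEdge p k e m ∈ C) (hsub : ∀ l, lo' ≤ l → l ≤ hi' → (lo ≤ l ∧ l ≤ hi) ∨ l = m) :
    Seg p k C e lo' hi' := fun l h1 h2 =>
  (hsub l h1 h2).elim (fun hh => h l hh.1 hh.2) (fun hh => hh ▸ hm)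

variable (hp : ∀ e : G.edgeSet, s((p e).1, (p e).2) = (e : Sym2 V))

include hp in
lemma p_ne (e : G.edgeSet) : (p e).1 ≠ (p e).2 := by
  intro h
  have hd : ¬ (e : Sym2 V).IsDiag := G.not_isDiag_of_mem_edgeSet e.2
  apply hd
  rw [← hp e, h]
  exact Sym2.isDiag_iff_proj_eq |>.mpr rfl

include hp in
lemma reach_ends {e : G.edgeSet} (hfull : ∀ t, t < k → gEdge p k e t ∈ C) :
    (SimpleGraph.fromEdgeSet (fullSet p k C)).Reachable (p e).1 (p e).2 :=
  SimpleGraph.Adj.reachable ((SimpleGraph.fromEdgeSet_adj _).mpr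
    ⟨⟨e, (hp e).symm ▸ rfl, hfull⟩, p_ne hp e⟩)

include hk in
lemma adj_cases (hC : ∀ q ∈ C, q ∈ (stretchGraph G k p).edgeSet)
    {x z : V ⊕ (G.edgeSet × Fin (k - 1))} (h : (SimpleGraph.fromEdgeSet C).Adj x z) :
    ∃ (e : G.edgeSet) (t : ℕ), t < k ∧ gEdge p k e t ∈ C ∧
      ((x = gVert p k e t ∧ z = gVert p k e (t + 1)) ∨
        (x = gVert p k e (t + 1) ∧ z = gVert p k e t)) := by
  rw [SimpleGraph.fromEdgeSet_adj] at h
  obtain ⟨e, t, ht, hq⟩ := (mem_stretch_edgeSet hk).mp (hC _ h.1)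
  refine ⟨e, t, ht, hq ▸ h.1, ?_⟩
  rw [gEdge, Sym2.eq_iff] at hq
  exact hq

include hk hp in
lemma anch_transfer (hC : ∀ q ∈ C, q ∈ (stretchGraph G k p).edgeSet)
    {x z : V ⊕ (G.edgeSet × Fin (k - 1))} {u : V}
    (h : (SimpleGraph.fromEdgeSet C).Adj x z) (hu : Anch p k C z u) :
    ∃ u', Anch p k C x u' ∧ (SimpleGraph.fromEdgeSet (fullSet p k C)).Reachable u' u := by
  obtain ⟨e, t, ht, hmem, hor⟩ := adj_cases hk hC h
  by_cases ht0 : t = 0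
  · subst ht0
    rcases hor with ⟨hx, hz⟩ | ⟨hx, hz⟩
    · subst hx; subst hz
      rw [gVert_mid e (by omega) (by omega), anch_inr] at hu
      rcases hu with ⟨rfl, _⟩ | ⟨rfl, hseg⟩
      · exact ⟨(p e).1, by rw [gVert_zero]; exact anch_inl.mpr rfl, .refl _⟩
      · have hfull : ∀ s, s < k → gEdge p k e s ∈ C := by
          intro s hs
          rcases Nat.eq_zero_or_pos s with rfl | hspos
          · exact hmem
          · exact hseg s (by simp <;> omega) (by omega)
        exact ⟨(p e).1, by rw [gVert_zero]; exact anch_inl.mpr rfl, reach_ends hp hfull⟩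
    · subst hx; subst hz
      rw [gVert_zero, anch_inl] at hu
      refine ⟨u, ?_, .refl _⟩
      rw [gVert_mid e (by omega) (by omega), anch_inr]
      exact Or.inl ⟨hu.symm, fun l h1 h2 => by
        have : l = 0 := by simpa using h2
        exact this ▸ hmem⟩
  by_cases htk : t + 1 = k
  · rcases hor with ⟨hx, hz⟩ | ⟨hx, hz⟩
    · subst hx; subst hz
      rw [htk, gVert_k hk, anch_inl] at hu
      refine ⟨u, ?_, .refl _⟩
      rw [gVert_mid e (by omega) (by omega), anch_inr]
      refine Or.inr ⟨hu.symm, fun l h1 h2 => ?_⟩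
      have : l = t := by simp at h1; omega
      exact this ▸ hmem
    · subst hx; subst hz
      rw [gVert_mid e (by omega) (by omega), anch_inr] at hu
      rcases hu with ⟨rfl, hseg⟩ | ⟨rfl, _⟩
      · have hfull : ∀ s, s < k → gEdge p k e s ∈ C := by
          intro s hs
          rcases Nat.lt_or_ge s t with hst | hst
          · exact hseg s (by omega) (by simp <;> omega)
          · have : s = t := by omega
            exact this ▸ hmem
        refine ⟨(p e).2, ?_, (reach_ends hp hfull).symm⟩
        rw [htk, gVert_k hk]; exact anch_inl.mpr rfl
      · refine ⟨(p e).2, ?_, .refl _⟩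
        rw [htk, gVert_k hk]; exact anch_inl.mpr rfl
  · -- middle : both ends interior
    have h1t : 1 ≤ t := by omega
    have htk' : t + 1 < k := by omega
    rcases hor with ⟨hx, hz⟩ | ⟨hx, hz⟩
    · subst hx; subst hz
      rw [gVert_mid e (by omega) htk', anch_inr] at hu
      rcases hu with ⟨rfl, hseg⟩ | ⟨rfl, hseg⟩
      · refine ⟨(p e).1, ?_, .refl _⟩
        rw [gVert_mid e h1t (by omega), anch_inr]
        exact Or.inl ⟨rfl, hseg.mono (by omega) (by simp <;> omega)⟩
      · refine ⟨(p e).2, ?_, .refl _⟩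
        rw [gVert_mid e h1t (by omega), anch_inr]
        refine Or.inr ⟨rfl, hseg.of_subset hmem (fun l hl1 hl2 => ?_)⟩
        simp at hl1 hl2 ⊢ <;> omega
    · subst hx; subst hz
      rw [gVert_mid e h1t (by omega), anch_inr] at hu
      rcases hu with ⟨rfl, hseg⟩ | ⟨rfl, hseg⟩
      · refine ⟨(p e).1, ?_, .refl _⟩
        rw [gVert_mid e (by omega) htk', anch_inr]
        refine Or.inl ⟨rfl, hseg.of_subset hmem (fun l hl1 hl2 => ?_)⟩
        simp at hl1 hl2 ⊢ <;> omega
      · refine ⟨(p e).2, ?_, .refl _⟩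
        rw [gVert_mid e (by omega) htk', anch_inr]
        exact Or.inr ⟨rfl, hseg.mono (by simp <;> omega) (by omega)⟩

include hk hp in
theorem walk_struct (hC : ∀ q ∈ C, q ∈ (stretchGraph G k p).edgeSet)
    {x y : V ⊕ (G.edgeSet × Fin (k - 1))} (W : (SimpleGraph.fromEdgeSet C).Walk x y) :
    (∃ u v, Anch p k C x u ∧ Anch p k C y v ∧
        (SimpleGraph.fromEdgeSet (fullSet p k C)).Reachable u v)
    ∨ (∃ (f : G.edgeSet) (i i' : Fin (k - 1)), x = Sum.inr (f, i) ∧ y = Sum.inr (f, i') ∧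
        Seg p k C f (min i.val i'.val + 1) (max i.val i'.val)) := by
  induction W with
  | nil =>
    rename_i a
    rcases a with u | ⟨f, i⟩
    · exact Or.inl ⟨u, u, rfl, rfl, .refl _⟩
    · exact Or.inr ⟨f, i, i, rfl, rfl, fun l h1 h2 => (by omega : False).elim⟩
  | @cons x z y h W ih =>
    rcases ih with ⟨u, v, hzu, hyv, hr⟩ | ⟨f, j, i', hz, hy, hseg⟩
    · obtain ⟨u', hxu', hr'⟩ := anch_transfer hk hp hC h hzu
      exact Or.inl ⟨u', v, hxu', hyv, hr'.trans hr⟩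
    · subst hz
      obtain ⟨e, t, ht, hmem, hor⟩ := adj_cases hk hC h
      have hi' := i'.isLt
      by_cases ht0 : t = 0
      · subst ht0
        rcases hor with ⟨hx, hz2⟩ | ⟨hx, hz2⟩
        · rw [gVert_mid e (by omega) (by omega)] at hz2
          simp only [Sum.inr.injEq, Prod.mk.injEq] at hz2
          obtain ⟨rfl, hj⟩ := hz2
          have hjv : (j : ℕ) = 0 := congrArg Fin.val hj
          refine Or.inl ⟨(p f).1, (p f).1, ?_, ?_, .refl _⟩
          · rw [hx, gVert_zero]; exact anch_inl.mpr rfl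
          · rw [hy, anch_inr]
            exact Or.inl ⟨rfl, hseg.of_subset hmem (fun l h1 h2 => by omega)⟩
        · rw [gVert_zero] at hz2
          exact absurd hz2 (by simp)
      by_cases htk : t + 1 = k
      · rcases hor with ⟨hx, hz2⟩ | ⟨hx, hz2⟩
        · rw [htk, gVert_k hk] at hz2
          exact absurd hz2 (by simp)
        · rw [gVert_mid e (by omega) (by omega)] at hz2
          simp only [Sum.inr.injEq, Prod.mk.injEq] at hz2
          obtain ⟨rfl, hj⟩ := hz2
          have hjv : (j : ℕ) = t - 1 := congrArg Fin.val hj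
          refine Or.inl ⟨(p f).2, (p f).2, ?_, ?_, .refl _⟩
          · rw [hx, htk, gVert_k hk]; exact anch_inl.mpr rfl
          · rw [hy, anch_inr]
            exact Or.inr ⟨rfl, hseg.of_subset hmem (fun l h1 h2 => by omega)⟩
      · have h1t : 1 ≤ t := by omega
        have htk' : t + 1 < k := by omega
        rcases hor with ⟨hx, hz2⟩ | ⟨hx, hz2⟩
        · rw [gVert_mid e (by omega) htk'] at hz2
          simp only [Sum.inr.injEq, Prod.mk.injEq] at hz2
          obtain ⟨rfl, hj⟩ := hz2
          have hjv : (j : ℕ) = t + 1 - 1 := congrArg Fin.val hj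
          refine Or.inr ⟨f, ⟨t - 1, by omega⟩, i', ?_, hy, ?_⟩
          · rw [hx, gVert_mid f h1t (by omega)]
          · show Seg p k C f (min (t - 1) i'.val + 1) (max (t - 1) i'.val)
            exact hseg.of_subset hmem (fun l h1 h2 => by omega)
        · rw [gVert_mid e h1t (by omega)] at hz2
          simp only [Sum.inr.injEq, Prod.mk.injEq] at hz2
          obtain ⟨rfl, hj⟩ := hz2
          have hjv : (j : ℕ) = t - 1 := congrArg Fin.val hj
          refine Or.inr ⟨f, ⟨t, by omega⟩, i', ?_, hy, ?_⟩
          · rw [hx, gVert_mid f (by omega) htk']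
            simp only [Sum.inr.injEq, Prod.mk.injEq, Fin.mk.injEq, true_and]
            omega
          · show Seg p k C f (min t i'.val + 1) (max t i'.val)
            exact hseg.of_subset hmem (fun l h1 h2 => by omega)

include hk in
lemma gVert_succ_ne {e : G.edgeSet} {t : ℕ} (ht : t < k) :
    gVert p k e t ≠ gVert p k e (t + 1) := by
  intro hcon
  rcases gVert_eq_elim hk (by omega) (by omega) hcon with ⟨_, h2⟩ | ⟨h1, h2⟩ <;> omega

include hk in
lemma gadget_step {e : G.edgeSet} {t : ℕ} (ht : t < k) (hmem : gEdge p k e t ∈ C) :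
    (SimpleGraph.fromEdgeSet C).Adj (gVert p k e t) (gVert p k e (t + 1)) :=
  (SimpleGraph.fromEdgeSet_adj _).mpr ⟨hmem, gVert_succ_ne hk ht⟩

include hk in
lemma reach_along {e : G.edgeSet} (d lo : ℕ) (hd : lo + d ≤ k)
    (hmem : ∀ t, lo ≤ t → t < lo + d → gEdge p k e t ∈ C) :
    (SimpleGraph.fromEdgeSet C).Reachable (gVert p k e lo) (gVert p k e (lo + d)) := by
  induction d with
  | zero => exact .refl _
  | succ n ih =>
    refine (ih (by omega) (fun t h1 h2 => hmem t h1 (by omega))).trans ?_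
    have : lo + (n + 1) = (lo + n) + 1 := by omega
    rw [this]
    exact (gadget_step hk (by omega) (hmem (lo + n) (by omega) (by omega))).reachable

include hk hp in
lemma lift_reach {R : Set (Sym2 V)}
    (hR : ∀ q ∈ R, ∃ f : G.edgeSet, q = (f : Sym2 V) ∧ ∀ t, t < k → gEdge p k f t ∈ C)
    {u v : V} (h : (SimpleGraph.fromEdgeSet R).Reachable u v) :
    (SimpleGraph.fromEdgeSet C).Reachable (Sum.inl u) (Sum.inl v) := by
  obtain ⟨W⟩ := h
  induction W with
  | nil => exact .refl _
  | @cons a b c hadj W ih =>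
    refine Reachable.trans ?_ ih
    rw [SimpleGraph.fromEdgeSet_adj] at hadj
    obtain ⟨f, hq, hfull⟩ := hR _ hadj.1
    rw [← hp f] at hq
    have hreach : (SimpleGraph.fromEdgeSet C).Reachable (Sum.inl (p f).1) (Sum.inl (p f).2) := by
      have := reach_along (C := C) hk k 0 (by omega) (fun t h1 h2 => hfull t (by omega))
      rwa [gVert_zero, Nat.zero_add, gVert_k hk] at this
    rcases Sym2.eq_iff.mp hq with ⟨h1, h2⟩ | ⟨h1, h2⟩
    · rw [← h1, ← h2] at hreach; exact hreach
    · rw [← h1, ← h2] at hreach; exact hreach.symm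

include hk hp in
lemma isAcyclic_full_of_isAcyclic {A' : Set (Sym2 (V ⊕ (G.edgeSet × Fin (k - 1))))}
    (hA' : A' ⊆ (stretchGraph G k p).edgeSet)
    (h : (SimpleGraph.fromEdgeSet A').IsAcyclic) :
    (SimpleGraph.fromEdgeSet (fullSet p k A')).IsAcyclic := by
  rw [SimpleGraph.isAcyclic_iff_forall_adj_isBridge]
  intro u v huv
  obtain ⟨hmemf, hne⟩ := (SimpleGraph.fromEdgeSet_adj _).mp huv
  obtain ⟨e, he, hfull⟩ := hmemf
  rw [SimpleGraph.isBridge_iff, SimpleGraph.deleteEdges]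
  intro hreach
  -- the first gadget edge of `e` is a bridge in the stretch forest
  have hadj0 : (SimpleGraph.fromEdgeSet A').Adj (gVert p k e 0) (gVert p k e 1) :=
    gadget_step hk (by omega) (hfull 0 (by omega))
  have hbr := (SimpleGraph.isAcyclic_iff_forall_adj_isBridge.mp h) hadj0
  rw [SimpleGraph.isBridge_iff, SimpleGraph.deleteEdges] at hbr
  apply hbr
  set a0 : Sym2 (V ⊕ (G.edgeSet × Fin (k - 1))) := gEdge p k e 0 with ha0
  set C : Set (Sym2 (V ⊕ (G.edgeSet × Fin (k - 1)))) := A' \ {a0} with hCdef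
  have hmono : SimpleGraph.fromEdgeSet C ≤
      SimpleGraph.fromEdgeSet A' \ SimpleGraph.fromEdgeSet {a0} := by
    intro x y hxy
    rw [SimpleGraph.fromEdgeSet_adj] at hxy
    rw [SimpleGraph.sdiff_adj, SimpleGraph.fromEdgeSet_adj, SimpleGraph.fromEdgeSet_adj]
    exact ⟨⟨hxy.1.1, hxy.2⟩, fun hcon => hxy.1.2 hcon.1⟩
  have hpd : ∀ e : G.edgeSet, (p e).1 ≠ (p e).2 := p_ne hp
  -- reachability u to v without using gadget `e`
  have hreach1 : (SimpleGraph.fromEdgeSet C).Reachable (Sum.inl u) (Sum.inl v) := by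
    refine lift_reach hk hp (R := fullSet p k A' \ {s(u, v)}) ?_ ?_
    · rintro q ⟨⟨f, hqf, hfully⟩, hqne⟩
      refine ⟨f, hqf, fun t ht => ⟨hfully t ht, fun hcon => ?_⟩⟩
      have := gEdge_inj hk hpd ht (by omega : (0:ℕ) < k)
        ((Set.mem_singleton_iff.mp hcon).trans ha0)
      apply hqne
      rw [hqf, this.1, ← he]
      rfl
    · refine Reachable.mono ?_ hreach
      intro x y hxy
      rw [SimpleGraph.sdiff_adj, SimpleGraph.fromEdgeSet_adj, SimpleGraph.fromEdgeSet_adj] at hxy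
      rw [SimpleGraph.fromEdgeSet_adj]
      exact ⟨⟨hxy.1.1, fun hcon => hxy.2 ⟨hcon, hxy.1.2⟩⟩, hxy.1.2⟩
  -- reachability from the far end back to the first interior vertex
  have hreach2 : (SimpleGraph.fromEdgeSet C).Reachable (gVert p k e 1) (gVert p k e k) := by
    have hmem2 : ∀ t, 1 ≤ t → t < 1 + (k - 1) → gEdge p k e t ∈ C := by
      intro t h1 h2
      refine ⟨hfull t (by omega), fun hcon => ?_⟩
      have := gEdge_inj hk hpd (show t < k by omega) (show (0:ℕ) < k by omega)
        ((Set.mem_singleton_iff.mp hcon).trans ha0)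
      omega
    have := reach_along (e := e) hk (k - 1) 1 (by omega) hmem2
    have hh : 1 + (k - 1) = k := by omega
    rwa [hh] at this
  -- compose
  have he2 : s(u, v) = s((p e).1, (p e).2) := by rw [he, hp e]
  have hgoal : (SimpleGraph.fromEdgeSet C).Reachable (gVert p k e 0) (gVert p k e 1) := by
    rcases Sym2.eq_iff.mp he2 with ⟨h1, h2⟩ | ⟨h1, h2⟩
    · have : (SimpleGraph.fromEdgeSet C).Reachable (gVert p k e 0) (gVert p k e k) := by
        rw [gVert_zero, gVert_k hk, ← h1, ← h2]
        exact hreach1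
      exact this.trans hreach2.symm
    · have : (SimpleGraph.fromEdgeSet C).Reachable (gVert p k e 0) (gVert p k e k) := by
        rw [gVert_zero, gVert_k hk, ← h1, ← h2]
        exact hreach1.symm
      exact this.trans hreach2.symm
  exact hgoal.mono hmono

include hk hp in
lemma no_full_reach {A' : Set (Sym2 (V ⊕ (G.edgeSet × Fin (k - 1))))} {e : G.edgeSet} {t : ℕ}
    (ht : t < k) (h : (SimpleGraph.fromEdgeSet (fullSet p k A')).IsAcyclic)
    (hfullA : ∀ s, s < k → gEdge p k e s ∈ A')
    (hr : (SimpleGraph.fromEdgeSet (fullSet p k (A' \ {gEdge p k e t}))).Reachable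
      (p e).1 (p e).2) : False := by
  have hpd := p_ne hp
  have hadj : (SimpleGraph.fromEdgeSet (fullSet p k A')).Adj (p e).1 (p e).2 :=
    (SimpleGraph.fromEdgeSet_adj _).mpr ⟨⟨e, (hp e), hfullA⟩, hpd e⟩
  have hbr := (SimpleGraph.isAcyclic_iff_forall_adj_isBridge.mp h) hadj
  rw [SimpleGraph.isBridge_iff, SimpleGraph.deleteEdges] at hbr
  apply hbr
  refine hr.mono ?_
  intro x y hxy
  rw [SimpleGraph.fromEdgeSet_adj] at hxy
  obtain ⟨⟨f, hqf, hff⟩, hne⟩ := hxy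
  rw [SimpleGraph.sdiff_adj, SimpleGraph.fromEdgeSet_adj, SimpleGraph.fromEdgeSet_adj]
  refine ⟨⟨⟨f, hqf, fun s hs => (hff s hs).1⟩, hne⟩, fun hcon => ?_⟩
  have hq : s(x, y) = (e : Sym2 V) := (Set.mem_singleton_iff.mp hcon.1).trans (hp e)
  have hfe : f = e := Subtype.ext (hqf.symm.trans hq)
  rw [hfe] at hff
  exact (hff t ht).2 rfl

include hk hp in
lemma isAcyclic_of_isAcyclic_full {A' : Set (Sym2 (V ⊕ (G.edgeSet × Fin (k - 1))))}
    (hA' : A' ⊆ (stretchGraph G k p).edgeSet)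
    (h : (SimpleGraph.fromEdgeSet (fullSet p k A')).IsAcyclic) :
    (SimpleGraph.fromEdgeSet A').IsAcyclic := by
  rw [SimpleGraph.isAcyclic_iff_forall_adj_isBridge]
  intro x y hxy
  obtain ⟨hmemA, hnexy⟩ := (SimpleGraph.fromEdgeSet_adj _).mp hxy
  obtain ⟨e, t, ht, heq⟩ := (mem_stretch_edgeSet hk).mp (hA' hmemA)
  rw [SimpleGraph.isBridge_iff, SimpleGraph.deleteEdges]
  intro hreach
  set C : Set (Sym2 (V ⊕ (G.edgeSet × Fin (k - 1)))) := A' \ {gEdge p k e t} with hCdef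
  have hCsub : ∀ q ∈ C, q ∈ (stretchGraph G k p).edgeSet := fun q hq => hA' hq.1
  have hat : gEdge p k e t ∉ C := fun hc => hc.2 rfl
  have hmemA' : gEdge p k e t ∈ A' := heq ▸ hmemA
  have hreachC : (SimpleGraph.fromEdgeSet C).Reachable x y := by
    refine hreach.mono ?_
    intro a b hab
    rw [SimpleGraph.sdiff_adj, SimpleGraph.fromEdgeSet_adj,
      SimpleGraph.fromEdgeSet_adj] at hab
    rw [SimpleGraph.fromEdgeSet_adj]
    refine ⟨⟨hab.1.1, fun hcon => hab.2 ⟨?_, hab.1.2⟩⟩, hab.1.2⟩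
    rw [Set.mem_singleton_iff, heq]
    exact Set.mem_singleton_iff.mp hcon
  have heq' : s(x, y) = s(gVert p k e t, gVert p k e (t + 1)) := heq
  have hwr : (SimpleGraph.fromEdgeSet C).Reachable (gVert p k e t) (gVert p k e (t + 1)) := by
    rcases Sym2.eq_iff.mp heq' with ⟨hx1, hy1⟩ | ⟨hx1, hy1⟩
    · rw [← hx1, ← hy1]; exact hreachC
    · rw [← hx1, ← hy1]; exact hreachC.symm
  obtain ⟨W⟩ := hwr
  have P := walk_struct hk hp hCsub W
  by_cases ht0 : t = 0
  · subst ht0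
    rcases P with ⟨u, v, hxu, hyv, hr⟩ | ⟨f, i, i', hxe, _, _⟩
    · rw [gVert_zero, anch_inl] at hxu
      rw [gVert_mid e (by omega) (by omega), anch_inr] at hyv
      rcases hyv with ⟨rfl, hsegv⟩ | ⟨rfl, hsegv⟩
      · exact hat (hsegv 0 (Nat.zero_le _) (Nat.zero_le _))
      · refine no_full_reach hk hp ht h (fun s hs => ?_) (hxu ▸ hr)
        rcases Nat.eq_zero_or_pos s with rfl | hspos
        · exact hmemA'
        · exact (hsegv s (show 0 + 1 ≤ s by omega) (by omega)).1
    · rw [gVert_zero] at hxe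
      exact absurd hxe (by simp)
  by_cases htk : t + 1 = k
  · rcases P with ⟨u, v, hxu, hyv, hr⟩ | ⟨f, i, i', _, hye, _⟩
    · rw [htk, gVert_k hk, anch_inl] at hyv
      rw [gVert_mid e (by omega) ht, anch_inr] at hxu
      rcases hxu with ⟨rfl, hsegu⟩ | ⟨rfl, hsegu⟩
      · refine no_full_reach hk hp ht h (fun s hs => ?_) (hyv ▸ hr)
        rcases Nat.lt_or_ge s t with hst | hst
        · exact (hsegu s (Nat.zero_le _) (show s ≤ t - 1 by omega)).1
        · have : s = t := by omega
          exact this ▸ hmemA'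
      · exact hat (hsegu t (show t - 1 + 1 ≤ t by omega) (by omega))
    · rw [htk, gVert_k hk] at hye
      exact absurd hye (by simp)
  · have h1t : 1 ≤ t := by omega
    have htk' : t + 1 < k := by omega
    rcases P with ⟨u, v, hxu, hyv, hr⟩ | ⟨f, i, i', hxe, hye, hseg⟩
    · rw [gVert_mid e h1t ht, anch_inr] at hxu
      rw [gVert_mid e (by omega) htk', anch_inr] at hyv
      rcases hxu with ⟨rfl, hsegu⟩ | ⟨rfl, hsegu⟩
      · rcases hyv with ⟨hv1, hsegv⟩ | ⟨hv1, hsegv⟩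
        · exact hat (hsegv t (Nat.zero_le _) (show t ≤ t + 1 - 1 by omega))
        · subst hv1
          refine no_full_reach hk hp ht h (fun s hs => ?_) hr
          rcases Nat.lt_or_ge s t with hst | hst
          · exact (hsegu s (Nat.zero_le _) (show s ≤ t - 1 by omega)).1
          · rcases Nat.eq_or_lt_of_le hst with rfl | hst'
            · exact hmemA'
            · exact (hsegv s (show t + 1 - 1 + 1 ≤ s by omega) (by omega)).1
      · exact hat (hsegu t (show t - 1 + 1 ≤ t by omega) (by omega))
    · rw [gVert_mid e h1t ht] at hxe
      rw [gVert_mid e (by omega) htk'] at hye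
      simp only [Sum.inr.injEq, Prod.mk.injEq] at hxe hye
      have hiv : (i : ℕ) = t - 1 := (congrArg Fin.val hxe.2).symm
      have hi'v : (i' : ℕ) = t + 1 - 1 := (congrArg Fin.val hye.2).symm
      rw [hiv, hi'v, ← hxe.1] at hseg
      exact hat (hseg t (by omega) (by omega))

/-! ### Counting lemmas -/

section Counting

lemma sum_powerset_union {α : Type*} [DecidableEq α] {u v : Finset α} (huv : Disjoint u v)
    (F : Finset α → ℝ) :
    ∑ A ∈ (u ∪ v).powerset, F A = ∑ B ∈ u.powerset, ∑ C ∈ v.powerset, F (B ∪ C) := by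
  have h1 : ∑ A ∈ (u ∪ v).powerset, F A
      = ∑ q ∈ u.powerset ×ˢ v.powerset, F (q.1 ∪ q.2) := by
    refine Finset.sum_nbij' (fun A => (A ∩ u, A ∩ v)) (fun q => q.1 ∪ q.2) ?_ ?_ ?_ ?_ ?_
    · intro A hA
      rw [Finset.mem_powerset] at hA
      rw [Finset.mem_product, Finset.mem_powerset, Finset.mem_powerset]
      exact ⟨Finset.inter_subset_right, Finset.inter_subset_right⟩
    · intro q hq
      rw [Finset.mem_product, Finset.mem_powerset, Finset.mem_powerset] at hq
      rw [Finset.mem_powerset]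
      exact Finset.union_subset_union hq.1 hq.2
    · intro A hA
      rw [Finset.mem_powerset] at hA
      show A ∩ u ∪ A ∩ v = A
      rw [← Finset.inter_union_distrib_left, Finset.inter_eq_left.mpr hA]
    · intro q hq
      rw [Finset.mem_product, Finset.mem_powerset, Finset.mem_powerset] at hq
      have h1 : q.1 ∩ v = ∅ := Finset.disjoint_iff_inter_eq_empty.mp (huv.mono_left hq.1)
      have h2 : q.2 ∩ u = ∅ :=
        Finset.disjoint_iff_inter_eq_empty.mp ((huv.symm).mono_left hq.2)
      have e1 : (q.1 ∪ q.2) ∩ u = q.1 := by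
        rw [Finset.union_inter_distrib_right, Finset.inter_eq_left.mpr hq.1, h2,
          Finset.union_empty]
      have e2 : (q.1 ∪ q.2) ∩ v = q.2 := by
        rw [Finset.union_inter_distrib_right, Finset.inter_eq_left.mpr hq.2, h1,
          Finset.empty_union]
      show ((q.1 ∪ q.2) ∩ u, (q.1 ∪ q.2) ∩ v) = q
      rw [e1, e2]
    · intro A hA
      rw [Finset.mem_powerset] at hA
      show F A = F (A ∩ u ∪ A ∩ v)
      rw [← Finset.inter_union_distrib_left, Finset.inter_eq_left.mpr hA]
  rw [h1, Finset.sum_product]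

lemma sum_powerset_prod {ι α : Type*} [DecidableEq ι] [DecidableEq α] (s : Finset ι)
    (t : ι → Finset α)
    (hd : ∀ i ∈ s, ∀ j ∈ s, i ≠ j → Disjoint (t i) (t j)) (g : ι → Finset α → ℝ) :
    ∑ A ∈ (s.biUnion t).powerset, ∏ i ∈ s, g i (A ∩ t i)
      = ∏ i ∈ s, ∑ S ∈ (t i).powerset, g i S := by
  induction s using Finset.induction_on with
  | empty => simp
  | @insert a s ha ih =>
    have hdisj : Disjoint (t a) (s.biUnion t) := by
      rw [Finset.disjoint_biUnion_right]
      intro i hi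
      exact hd a (Finset.mem_insert_self a s) i (Finset.mem_insert_of_mem hi)
        (fun hcon => ha (hcon ▸ hi))
    rw [Finset.biUnion_insert, sum_powerset_union hdisj]
    have hstep : ∀ B ∈ (t a).powerset, ∀ C ∈ (s.biUnion t).powerset,
        ∏ i ∈ insert a s, g i ((B ∪ C) ∩ t i) = g a B * ∏ i ∈ s, g i (C ∩ t i) := by
      intro B hB C hC
      rw [Finset.mem_powerset] at hB hC
      rw [Finset.prod_insert ha]
      have h1 : (B ∪ C) ∩ t a = B := by
        rw [Finset.union_inter_distrib_right, Finset.inter_eq_left.mpr hB,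
          Finset.disjoint_iff_inter_eq_empty.mp ((hdisj.symm).mono_left hC),
          Finset.union_empty]
      congr 1
      · rw [h1]
      · refine Finset.prod_congr rfl (fun i hi => ?_)
        have hBi : B ∩ t i = ∅ := Finset.disjoint_iff_inter_eq_empty.mp
          ((hd a (Finset.mem_insert_self a s) i (Finset.mem_insert_of_mem hi)
            (fun hcon => ha (hcon ▸ hi))).mono_left hB)
        rw [Finset.union_inter_distrib_right, hBi, Finset.empty_union]
    calc ∑ B ∈ (t a).powerset, ∑ C ∈ (s.biUnion t).powerset,
          ∏ i ∈ insert a s, g i ((B ∪ C) ∩ t i)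
        = ∑ B ∈ (t a).powerset, ∑ C ∈ (s.biUnion t).powerset,
            g a B * ∏ i ∈ s, g i (C ∩ t i) := by
          refine Finset.sum_congr rfl (fun B hB => Finset.sum_congr rfl (fun C hC => ?_))
          exact hstep B hB C hC
      _ = (∑ B ∈ (t a).powerset, g a B) * ∑ C ∈ (s.biUnion t).powerset,
            ∏ i ∈ s, g i (C ∩ t i) := by
          rw [← Finset.sum_mul_sum]
      _ = ∏ i ∈ insert a s, ∑ S ∈ (t i).powerset, g i S := by
          rw [Finset.prod_insert ha, ih (fun i hi j hj hij =>
            hd i (Finset.mem_insert_of_mem hi) j (Finset.mem_insert_of_mem hj) hij)]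

lemma sum_pow_card {α : Type*} [DecidableEq α] (T : Finset α) (x : ℝ) :
    ∑ S ∈ T.powerset, x ^ S.card = (x + 1) ^ T.card := by
  induction T using Finset.induction_on with
  | empty => simp
  | @insert a T ha ih =>
    rw [Finset.sum_powerset_insert ha, Finset.card_insert_of_notMem ha]
    have : ∑ S ∈ T.powerset, x ^ (insert a S).card
        = ∑ S ∈ T.powerset, x * x ^ S.card := by
      refine Finset.sum_congr rfl (fun S hS => ?_)
      rw [Finset.mem_powerset] at hS
      rw [Finset.card_insert_of_notMem (fun hcon => ha (hS hcon)), pow_succ]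
      ring
    rw [this, ← Finset.mul_sum, ih]
    ring

end Counting

/-! ### Finset versions -/

noncomputable def gFinset (p : G.edgeSet → V × V) (k : ℕ) (e : G.edgeSet) :
    Finset (Sym2 (V ⊕ (G.edgeSet × Fin (k - 1)))) :=
  (Finset.range k).image (gEdge p k e)

lemma mem_gFinset {q : Sym2 (V ⊕ (G.edgeSet × Fin (k - 1)))} {e : G.edgeSet} :
    q ∈ gFinset p k e ↔ ∃ t, t < k ∧ q = gEdge p k e t := by
  rw [gFinset, Finset.mem_image]
  constructor
  · rintro ⟨t, ht, rfl⟩; exact ⟨t, Finset.mem_range.mp ht, rfl⟩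
  · rintro ⟨t, ht, rfl⟩; exact ⟨t, Finset.mem_range.mpr ht, rfl⟩

include hk in
lemma card_gFinset (hpd : ∀ e : G.edgeSet, (p e).1 ≠ (p e).2) (e : G.edgeSet) :
    (gFinset p k e).card = k := by
  rw [gFinset, Finset.card_image_of_injOn, Finset.card_range]
  intro t ht s hs h
  exact (gEdge_inj hk hpd (Finset.mem_range.mp ht) (Finset.mem_range.mp hs) h).2

include hk in
lemma gFinset_disjoint (hpd : ∀ e : G.edgeSet, (p e).1 ≠ (p e).2) {e f : G.edgeSet}
    (hef : e ≠ f) : Disjoint (gFinset p k e) (gFinset p k f) := by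
  rw [Finset.disjoint_left]
  intro q hq hq'
  obtain ⟨t, ht, rfl⟩ := mem_gFinset.mp hq
  obtain ⟨s', hs', h⟩ := mem_gFinset.mp hq'
  exact hef (gEdge_inj hk hpd ht hs' h).1

section FintypeV

variable [Fintype V]

include hk in
lemma stretch_edgeFinset_eq :
    (stretchGraph G k p).edgeFinset
      = Finset.univ.biUnion (fun e : G.edgeSet => gFinset p k e) := by
  ext q
  rw [SimpleGraph.mem_edgeFinset, mem_stretch_edgeSet hk, Finset.mem_biUnion]
  constructor
  · rintro ⟨e, t, ht, rfl⟩
    exact ⟨e, Finset.mem_univ e, mem_gFinset.mpr ⟨t, ht, rfl⟩⟩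
  · rintro ⟨e, -, hq⟩
    obtain ⟨t, ht, rfl⟩ := mem_gFinset.mp hq
    exact ⟨e, t, ht, rfl⟩

noncomputable def fullFinset (p : G.edgeSet → V × V) (k : ℕ)
    (A' : Finset (Sym2 (V ⊕ (G.edgeSet × Fin (k - 1))))) : Finset (Sym2 V) :=
  G.edgeFinset.filter
    (fun q => ∃ e : G.edgeSet, (e : Sym2 V) = q ∧ gFinset p k e ⊆ A')

lemma mem_fullFinset {A' : Finset (Sym2 (V ⊕ (G.edgeSet × Fin (k - 1))))} {q : Sym2 V} :
    q ∈ fullFinset p k A' ↔ ∃ e : G.edgeSet, (e : Sym2 V) = q ∧ gFinset p k e ⊆ A' := by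
  rw [fullFinset, Finset.mem_filter]
  constructor
  · exact fun h => h.2
  · rintro ⟨e, rfl, h⟩
    exact ⟨SimpleGraph.mem_edgeFinset.mpr e.2, e, rfl, h⟩

lemma coe_fullFinset (A' : Finset (Sym2 (V ⊕ (G.edgeSet × Fin (k - 1))))) :
    (↑(fullFinset p k A') : Set (Sym2 V)) = fullSet p k (↑A' : Set _) := by
  ext q
  rw [Finset.mem_coe, mem_fullFinset]
  constructor
  · rintro ⟨e, rfl, h⟩
    exact ⟨e, rfl, fun t ht => h (mem_gFinset.mpr ⟨t, ht, rfl⟩)⟩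
  · rintro ⟨e, rfl, h⟩
    refine ⟨e, rfl, fun q' hq' => ?_⟩
    obtain ⟨t, ht, rfl⟩ := mem_gFinset.mp hq'
    exact h t ht

lemma fullFinset_subset (A' : Finset (Sym2 (V ⊕ (G.edgeSet × Fin (k - 1))))) :
    fullFinset p k A' ⊆ G.edgeFinset := by
  intro q hq
  obtain ⟨e, rfl, -⟩ := mem_fullFinset.mp hq
  exact SimpleGraph.mem_edgeFinset.mpr e.2

include hk hp in
lemma isForest_iff_full {A' : Finset (Sym2 (V ⊕ (G.edgeSet × Fin (k - 1))))}
    (hA' : A' ⊆ (stretchGraph G k p).edgeFinset) :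
    IsForestEdgeSet A' ↔ IsForestEdgeSet (fullFinset p k A') := by
  have hsub : (↑A' : Set _) ⊆ (stretchGraph G k p).edgeSet :=
    fun q hq => SimpleGraph.mem_edgeFinset.mp (hA' hq)
  unfold IsForestEdgeSet
  rw [coe_fullFinset]
  exact ⟨fun h => isAcyclic_full_of_isAcyclic hk hp hsub h,
    fun h => isAcyclic_of_isAcyclic_full hk hp hsub h⟩

include hk in
lemma card_eq_sum_inter (hpd : ∀ e : G.edgeSet, (p e).1 ≠ (p e).2)
    {A' : Finset (Sym2 (V ⊕ (G.edgeSet × Fin (k - 1))))}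
    (hA' : A' ⊆ Finset.univ.biUnion (fun e : G.edgeSet => gFinset p k e)) :
    A'.card = ∑ e : G.edgeSet, (A' ∩ gFinset p k e).card := by
  have hA'eq : A' = Finset.univ.biUnion (fun e : G.edgeSet => A' ∩ gFinset p k e) := by
    ext q
    rw [Finset.mem_biUnion]
    constructor
    · intro hq
      obtain ⟨e, -, he⟩ := Finset.mem_biUnion.mp (hA' hq)
      exact ⟨e, Finset.mem_univ _, Finset.mem_inter.mpr ⟨hq, he⟩⟩
    · rintro ⟨e, -, he⟩
      exact (Finset.mem_inter.mp he).1
  conv_lhs => rw [hA'eq]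
  exact Finset.card_biUnion (fun e _ f _ hef =>
    (gFinset_disjoint hk hpd hef).mono Finset.inter_subset_right Finset.inter_subset_right)

lemma fullFinset_eq_iff {B : Finset (Sym2 V)} (hB : B ⊆ G.edgeFinset)
    {A' : Finset (Sym2 (V ⊕ (G.edgeSet × Fin (k - 1))))} :
    fullFinset p k A' = B ↔
      ∀ e : G.edgeSet, (gFinset p k e ⊆ A' ↔ (e : Sym2 V) ∈ B) := by
  constructor
  · intro h e
    rw [← h]
    constructor
    · intro h1; exact mem_fullFinset.mpr ⟨e, rfl, h1⟩
    · intro hmem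
      obtain ⟨f, hfe, hf⟩ := mem_fullFinset.mp hmem
      exact (Subtype.ext hfe : f = e) ▸ hf
  · intro h
    ext q
    rw [mem_fullFinset]
    constructor
    · rintro ⟨e, rfl, hsub⟩
      exact (h e).mp hsub
    · intro hq
      have hq' : q ∈ G.edgeSet := SimpleGraph.mem_edgeFinset.mp (hB hq)
      exact ⟨⟨q, hq'⟩, rfl, (h ⟨q, hq'⟩).mpr hq⟩

include hk in
lemma fiber_sum (hpd : ∀ e : G.edgeSet, (p e).1 ≠ (p e).2) (w : ℝ)
    {B : Finset (Sym2 V)} (hB : B ⊆ G.edgeFinset) :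
    ∑ A' ∈ (stretchGraph G k p).edgeFinset.powerset.filter
        (fun A' => fullFinset p k A' = B), w ^ A'.card
      = (w ^ k) ^ B.card * ((w + 1) ^ k - w ^ k) ^ (G.edgeFinset.card - B.card) := by
  classical
  set D : ℝ := (w + 1) ^ k - w ^ k with hD
  set g : G.edgeSet → Finset (Sym2 (V ⊕ (G.edgeSet × Fin (k - 1)))) → ℝ :=
    fun e S => if (S = gFinset p k e ↔ (e : Sym2 V) ∈ B) then w ^ S.card else 0 with hg
  rw [Finset.sum_filter]
  have step1 : ∀ A' ∈ (stretchGraph G k p).edgeFinset.powerset,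
      (if fullFinset p k A' = B then w ^ A'.card else 0)
        = ∏ e : G.edgeSet, g e (A' ∩ gFinset p k e) := by
    intro A' hA'
    rw [Finset.mem_powerset, stretch_edgeFinset_eq hk] at hA'
    by_cases hfull : fullFinset p k A' = B
    · rw [if_pos hfull]
      have hcond := (fullFinset_eq_iff hB).mp hfull
      have : ∀ e : G.edgeSet, g e (A' ∩ gFinset p k e)
          = w ^ (A' ∩ gFinset p k e).card := by
        intro e
        simp only [hg]
        exact if_pos (Finset.inter_eq_right.trans (hcond e))
      rw [Finset.prod_congr rfl (fun e _ => this e), Finset.prod_pow_eq_pow_sum,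
        ← card_eq_sum_inter hk hpd hA']
    · rw [if_neg hfull]
      have hex : ∃ e : G.edgeSet, ¬(gFinset p k e ⊆ A' ↔ (e : Sym2 V) ∈ B) := by
        by_contra hcon
        push_neg at hcon
        exact hfull ((fullFinset_eq_iff hB).mpr hcon)
      obtain ⟨e, he⟩ := hex
      refine (Finset.prod_eq_zero (Finset.mem_univ e) ?_).symm
      simp only [hg]
      exact if_neg (fun hcon => he ((Finset.inter_eq_right.symm).trans hcon))
  rw [Finset.sum_congr rfl step1, stretch_edgeFinset_eq hk,
    sum_powerset_prod _ _ (fun i _ j _ hij => gFinset_disjoint hk hpd hij) g]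
  have step2 : ∀ e : G.edgeSet, ∑ S ∈ (gFinset p k e).powerset, g e S
      = if (e : Sym2 V) ∈ B then (w ^ k : ℝ) else D := by
    intro e
    by_cases heB : (e : Sym2 V) ∈ B
    · rw [if_pos heB]
      have : ∀ S ∈ (gFinset p k e).powerset, g e S
          = if S = gFinset p k e then w ^ S.card else 0 := by
        intro S _
        simp only [hg]
        by_cases hS : S = gFinset p k e
        · rw [if_pos hS, if_pos (iff_of_true hS heB)]
        · rw [if_neg hS, if_neg (fun hcon => hS (hcon.mpr heB))]
      rw [Finset.sum_congr rfl this, Finset.sum_ite_eq' _ (gFinset p k e),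
        if_pos (Finset.mem_powerset.mpr (subset_refl _)), card_gFinset hk hpd]
    · rw [if_neg heB]
      have : ∀ S ∈ (gFinset p k e).powerset, g e S
          = w ^ S.card - (if S = gFinset p k e then w ^ S.card else 0) := by
        intro S _
        simp only [hg]
        by_cases hS : S = gFinset p k e
        · rw [if_pos hS, if_neg (fun hcon => heB (hcon.mp hS))]
          ring
        · rw [if_neg hS, if_pos (iff_of_false hS heB)]
          ring
      rw [Finset.sum_congr rfl this, Finset.sum_sub_distrib, sum_pow_card,
        Finset.sum_ite_eq' _ (gFinset p k e),
        if_pos (Finset.mem_powerset.mpr (subset_refl _)), card_gFinset hk hpd]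
  rw [Finset.prod_congr rfl (fun e _ => step2 e), Finset.prod_ite _ _,
    Finset.prod_const, Finset.prod_const]
  have hcard1 : (Finset.univ.filter (fun e : G.edgeSet => (e : Sym2 V) ∈ B)).card
      = B.card := by
    refine Finset.card_bij (fun e _ => (e : Sym2 V)) ?_ ?_ ?_
    · intro e he
      exact (Finset.mem_filter.mp he).2
    · intro e1 h1 e2 h2 h
      exact Subtype.ext h
    · intro q hq
      exact ⟨⟨q, SimpleGraph.mem_edgeFinset.mp (hB hq)⟩,
        Finset.mem_filter.mpr ⟨Finset.mem_univ _, hq⟩, rfl⟩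
  have hcard2 : (Finset.univ.filter (fun e : G.edgeSet => ¬((e : Sym2 V) ∈ B))).card
      = G.edgeFinset.card - B.card := by
    have htot := Finset.card_filter_add_card_filter_not
      (s := (Finset.univ : Finset G.edgeSet)) (fun e => (e : Sym2 V) ∈ B)
    rw [Finset.card_univ, ← SimpleGraph.edgeFinset_card] at htot
    omega
  rw [hcard1, hcard2]

end FintypeV

end StretchAux

/-- **The forest polynomial under a `k`-stretch.**  Let `G` be a finite simple graph with
`m` edges, `k ≥ 2`, and let `G'` be the `k`-stretch of `G`.  If `(w+1)^k − w^k ≠ 0`, then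
`F(G'; w) = ((w+1)^k − w^k)^m · F(G; w^k / ((w+1)^k − w^k))`, where
`F(H; x) = Σ_{A ∈ 𝔽(H)} x^{|A|}` is the univariate forest polynomial. -/
theorem forest_polynomial_stretch {V : Type*} [Fintype V] (G : SimpleGraph V)
    (k : ℕ) (hk : 2 ≤ k) (p : G.edgeSet → V × V)
    (hp : ∀ e : G.edgeSet, s((p e).1, (p e).2) = (e : Sym2 V))
    (w : ℝ) (hw : (w + 1) ^ k - w ^ k ≠ 0) :
    ∑ A' ∈ (stretchGraph G k p).edgeFinset.powerset.filter IsForestEdgeSet, w ^ A'.card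
    = ((w + 1) ^ k - w ^ k) ^ G.edgeFinset.card *
        ∑ A ∈ G.edgeFinset.powerset.filter IsForestEdgeSet,
          (w ^ k / ((w + 1) ^ k - w ^ k)) ^ A.card := by
  classical
  have hpd : ∀ e : G.edgeSet, (p e).1 ≠ (p e).2 := StretchAux.p_ne hp
  rw [Finset.sum_filter]
  have stepA : ∀ A' ∈ (stretchGraph G k p).edgeFinset.powerset,
      (if IsForestEdgeSet A' then w ^ A'.card else 0)
        = (if IsForestEdgeSet (StretchAux.fullFinset p k A') then w ^ A'.card else 0) := by
    intro A' hA'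
    exact if_congr (StretchAux.isForest_iff_full hk hp (Finset.mem_powerset.mp hA')) rfl rfl
  rw [Finset.sum_congr rfl stepA]
  have hmaps : ∀ A' ∈ (stretchGraph G k p).edgeFinset.powerset,
      StretchAux.fullFinset p k A' ∈ G.edgeFinset.powerset :=
    fun A' _ => Finset.mem_powerset.mpr (StretchAux.fullFinset_subset A')
  rw [← Finset.sum_fiberwise_of_maps_to hmaps
    (fun A' => if IsForestEdgeSet (StretchAux.fullFinset p k A') then w ^ A'.card else 0)]
  have stepB : ∀ B ∈ G.edgeFinset.powerset,
      (∑ A' ∈ (stretchGraph G k p).edgeFinset.powerset.filter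
          (fun A' => StretchAux.fullFinset p k A' = B),
        (if IsForestEdgeSet (StretchAux.fullFinset p k A') then w ^ A'.card else 0))
      = (if IsForestEdgeSet B then
          (w ^ k) ^ B.card *
            ((w + 1) ^ k - w ^ k) ^ (G.edgeFinset.card - B.card) else 0) := by
    intro B hB
    have h1 : ∀ A' ∈ (stretchGraph G k p).edgeFinset.powerset.filter
        (fun A' => StretchAux.fullFinset p k A' = B),
        (if IsForestEdgeSet (StretchAux.fullFinset p k A') then w ^ A'.card else 0)
          = (if IsForestEdgeSet B then w ^ A'.card else 0) := by
      intro A' hA'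
      rw [(Finset.mem_filter.mp hA').2]
    rw [Finset.sum_congr rfl h1]
    by_cases hf : IsForestEdgeSet B
    · simp only [if_pos hf]
      exact StretchAux.fiber_sum hk hpd w (Finset.mem_powerset.mp hB)
    · simp only [if_neg hf, Finset.sum_const_zero]
  rw [Finset.sum_congr rfl stepB, ← Finset.sum_filter, Finset.mul_sum]
  refine Finset.sum_congr rfl (fun B hB => ?_)
  have hBsub : B ⊆ G.edgeFinset := Finset.mem_powerset.mp (Finset.mem_filter.mp hB).1
  have hbm : B.card ≤ G.edgeFinset.card := Finset.card_le_card hBsub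
  rw [div_pow, pow_sub₀ _ hw hbm]
  field_simp
end

section
/- Let G = (V,E) be a finite simple graph with m edges, let k ≥ 2 be an integer, and let G' be the k-stretch of G. Let A ⊆ E be an acyclic edge subset of G. Then Σ_{A' ∈ 𝔽(G'), φ(A') = A} w^{|A'|} = w^{k·|A|} · ((w+1)^k − w^k)^{m−|A|}, as polynomials in w, where φ(A') is the set of edges e of G all of whose k replacing path-edges belong to A'. -/
open scoped Classical

/-- The set of `k` edges of the `k`-stretch `G'` forming the path that replaces the edge
`e` of `G`. -/
noncomputable def pathEdges {V : Type*} (G : SimpleGraph V) (k : ℕ) (hk : 2 ≤ k)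
    (p : G.edgeSet → V × V) (e : G.edgeSet) :
    Finset (Sym2 (V ⊕ (G.edgeSet × Fin (k - 1)))) :=
  insert s(Sum.inl (p e).1, Sum.inr (e, (⟨0, by omega⟩ : Fin (k - 1))))
    (insert s(Sum.inl (p e).2, Sum.inr (e, (⟨k - 2, by omega⟩ : Fin (k - 1))))
      ((Finset.univ : Finset (Fin (k - 2))).image
        (fun i =>
          s(Sum.inr (e, (⟨i.val, by have := i.isLt; omega⟩ : Fin (k - 1))),
            (Sum.inr (e, (⟨i.val + 1, by have := i.isLt; omega⟩ : Fin (k - 1)))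
              : V ⊕ (G.edgeSet × Fin (k - 1)))))))

/-- The projection `φ` from edge subsets of the `k`-stretch `G'` to edge subsets of `G`:
`φ(A')` consists of those edges `e` of `G` all of whose `k` replacing path-edges belong
to `A'`. -/
noncomputable def stretchProj {V : Type*} [Fintype V] (G : SimpleGraph V) (k : ℕ)
    (hk : 2 ≤ k) (p : G.edgeSet → V × V)
    (A' : Finset (Sym2 (V ⊕ (G.edgeSet × Fin (k - 1))))) : Finset (Sym2 V) :=
  (Finset.univ.filter (fun e : G.edgeSet => pathEdges G k hk p e ⊆ A')).image
    (fun e => (e : Sym2 V))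


section Stretch
variable {V : Type*} (G : SimpleGraph V) (k : ℕ) (p : G.edgeSet → V × V)

/-- the `i`-th vertex along the stretched path of edge `e` (for `0 ≤ i ≤ k`). -/
def pv (e : G.edgeSet) (i : ℕ) : V ⊕ (G.edgeSet × Fin (k - 1)) :=
  if h : 1 ≤ i ∧ i ≤ k - 1 then Sum.inr (e, ⟨i - 1, by omega⟩)
  else if i = 0 then Sum.inl (p e).1 else Sum.inl (p e).2

/-- the `i`-th edge along the stretched path of edge `e` (for `0 ≤ i < k`). -/
def pe (e : G.edgeSet) (i : ℕ) : Sym2 (V ⊕ (G.edgeSet × Fin (k - 1))) :=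
  s(pv G k p e i, pv G k p e (i + 1))

variable {G k p}

lemma pv_ne_of_ne {e f : G.edgeSet} (hef : e ≠ f) (i j : ℕ)
    (hi : 1 ≤ i ∧ i ≤ k - 1) : pv G k p e i ≠ pv G k p f j := by
  unfold pv
  rw [dif_pos hi]
  split_ifs with h
  · simp only [Sum.inr.injEq, Prod.mk.injEq, ne_eq]
    rintro ⟨h1, -⟩; exact hef h1
  · simp
  · simp

lemma pv_injOn {e : G.edgeSet} (hne : (p e).1 ≠ (p e).2) {i j : ℕ}
    (hi : i ≤ k) (hj : j ≤ k) (hij : pv G k p e i = pv G k p e j) : i = j := by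
  unfold pv at hij
  split_ifs at hij with h1 h2 h2 h3 h3 h3 h3 <;>
    simp_all [Sum.inl.injEq, Sum.inr.injEq, Fin.mk.injEq] <;> omega

lemma pe_injOn {e : G.edgeSet} (hne : (p e).1 ≠ (p e).2) {i j : ℕ}
    (hi : i < k) (hj : j < k) (hij : pe G k p e i = pe G k p e j) : i = j := by
  unfold pe at hij
  rw [Sym2.eq_iff] at hij
  rcases hij with ⟨h1, -⟩ | ⟨h1, h2⟩
  · exact pv_injOn hne (by omega) (by omega) h1
  · have := pv_injOn hne (i := i) (j := j + 1) (by omega) (by omega) h1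
    have := pv_injOn hne (i := i + 1) (j := j) (by omega) (by omega) h2
    omega

lemma pe_eq_of_eq (hk : 2 ≤ k) {e f : G.edgeSet} {i j : ℕ}
    (hi : i < k) (hj : j < k) (hij : pe G k p e i = pe G k p f j) : e = f := by
  by_contra hef
  -- one endpoint of `pe e i` is internal of `e`
  have hint : (1 ≤ i ∧ i ≤ k - 1) ∨ (1 ≤ i + 1 ∧ i + 1 ≤ k - 1) := by omega
  unfold pe at hij
  rw [Sym2.eq_iff] at hij
  rcases hint with h | h
  · rcases hij with ⟨h1, -⟩ | ⟨h1, -⟩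
    · exact pv_ne_of_ne hef i j h h1
    · exact pv_ne_of_ne hef i (j + 1) h h1
  · rcases hij with ⟨-, h1⟩ | ⟨-, h1⟩
    · exact pv_ne_of_ne hef (i + 1) (j + 1) h h1
    · exact pv_ne_of_ne hef (i + 1) j h h1

lemma pathEdges_eq (hk : 2 ≤ k) (e : G.edgeSet) :
    pathEdges G k hk p e = (Finset.range k).image (pe G k p e) := by
  ext x
  simp only [pathEdges, Finset.mem_insert, Finset.mem_image, Finset.mem_range, Finset.mem_univ,
    true_and]
  constructor
  · rintro (rfl | rfl | ⟨i, rfl⟩)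
    · exact ⟨0, by omega, by unfold pe pv; rw [dif_neg (by omega), if_pos rfl,
        dif_pos (by constructor <;> omega)]⟩
    · refine ⟨k - 1, by omega, ?_⟩
      unfold pe pv
      rw [dif_pos (by omega), dif_neg (by omega), if_neg (by omega)]
      rw [Sym2.eq_swap]
      simp only [show k - 1 - 1 = k - 2 from by omega]
    · refine ⟨i.val + 1, by have := i.isLt; omega, ?_⟩
      have := i.isLt
      unfold pe pv
      rw [dif_pos (by omega), dif_pos (by omega)]
      simp
  · rintro ⟨i, hi, rfl⟩
    rcases eq_or_ne i 0 with rfl | h0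
    · left
      unfold pe pv
      rw [dif_neg (by omega), if_pos rfl, dif_pos (by omega)]
    rcases eq_or_ne i (k - 1) with rfl | h1
    · right; left
      unfold pe pv
      rw [dif_pos (by omega), dif_neg (by omega), if_neg (by omega)]
      rw [Sym2.eq_swap]
      simp only [show k - 1 - 1 = k - 2 from by omega]
    · right; right
      refine ⟨⟨i - 1, by omega⟩, ?_⟩
      unfold pe pv
      rw [dif_pos (by omega), dif_pos (by omega)]
      simp only [Sym2.eq_iff, Sum.inr.injEq, Prod.mk.injEq, Fin.mk.injEq, true_and, and_true,
        eq_self_iff_true]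
      omega

lemma card_pathEdges (hk : 2 ≤ k) {e : G.edgeSet} (hne : (p e).1 ≠ (p e).2) :
    (pathEdges G k hk p e).card = k := by
  rw [pathEdges_eq hk, Finset.card_image_of_injOn, Finset.card_range]
  intro i hi j hj hij
  simp only [Finset.mem_coe, Finset.mem_range] at hi hj
  exact pe_injOn hne hi hj hij

lemma disjoint_pathEdges (hk : 2 ≤ k) {e f : G.edgeSet} (hef : e ≠ f) :
    Disjoint (pathEdges G k hk p e) (pathEdges G k hk p f) := by
  rw [Finset.disjoint_left]
  intro x hx hx'
  rw [pathEdges_eq hk, Finset.mem_image] at hx hx'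
  obtain ⟨i, hi, rfl⟩ := hx
  obtain ⟨j, hj, hij⟩ := hx'
  rw [Finset.mem_range] at hi hj
  exact hef (pe_eq_of_eq hk hj hi hij).symm

lemma stretch_edgeFinset [Fintype V] (hk : 2 ≤ k) (hp : ∀ e : G.edgeSet, s((p e).1, (p e).2) = (e : Sym2 V)) :
    (stretchGraph G k p).edgeFinset = Finset.univ.biUnion (fun e => pathEdges G k hk p e) := by
  have hne : ∀ e : G.edgeSet, (p e).1 ≠ (p e).2 := by
    intro e h
    have := G.not_isDiag_of_mem_edgeSet e.2
    rw [← hp e] at this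
    exact this (by rw [h]; exact Sym2.mk_isDiag_iff.2 rfl)
  ext x
  simp only [SimpleGraph.mem_edgeFinset, Finset.mem_biUnion, Finset.mem_univ, true_and,
    pathEdges_eq hk, Finset.mem_image, Finset.mem_range]
  induction x using Sym2.ind with
  | _ u v =>
  rw [SimpleGraph.mem_edgeSet]
  constructor
  · intro h
    rw [stretchGraph, SimpleGraph.fromRel_adj] at h
    obtain ⟨hne', h⟩ := h
    match u, v, h with
    | Sum.inl u, Sum.inr (e, i), Or.inl h | Sum.inr (e, i), Sum.inl u, Or.inr h =>
      rcases h with ⟨h1, rfl⟩ | ⟨h1, rfl⟩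
      · refine ⟨e, 0, by omega, ?_⟩
        unfold pe pv
        rw [dif_neg (by omega), if_pos rfl, dif_pos (by omega)]
        rw [Sym2.eq_iff]
        simp only [Sum.inl.injEq, Sum.inr.injEq, Prod.mk.injEq, Fin.ext_iff, true_and, and_true,
          eq_self_iff_true, reduceCtorEq, false_and, and_false, or_false,
          false_or]
        omega
      · refine ⟨e, k - 1, by omega, ?_⟩
        unfold pe pv
        rw [dif_pos (by omega), dif_neg (by omega), if_neg (by omega)]
        rw [Sym2.eq_iff]
        simp only [Sum.inl.injEq, Sum.inr.injEq, Prod.mk.injEq, Fin.ext_iff, true_and, and_true,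
          eq_self_iff_true, reduceCtorEq, false_and, and_false, or_false,
          false_or]
        omega
    | Sum.inr (e, i), Sum.inr (f, j), Or.inl h | Sum.inr (f, j), Sum.inr (e, i), Or.inr h =>
      obtain ⟨rfl, hij⟩ := h
      have hi := i.isLt
      have hj := j.isLt
      refine ⟨e, i.val + 1, by omega, ?_⟩
      unfold pe pv
      rw [dif_pos (by omega), dif_pos (by omega)]
      simp only [show i.val + 1 - 1 = i.val from by omega, show i.val + 1 + 1 - 1 = i.val + 1 from by omega]
      rw [Sym2.eq_iff]
      simp only [Sum.inr.injEq, Prod.mk.injEq, Fin.ext_iff, true_and, and_true,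
        eq_self_iff_true]
      omega
  · rintro ⟨e, i, hi, hx⟩
    have hadj : (stretchGraph G k p).Adj (pv G k p e i) (pv G k p e (i + 1)) := by
      rw [stretchGraph, SimpleGraph.fromRel_adj]
      refine ⟨fun h => by simpa using pv_injOn (hne e) (by omega) (by omega) h, ?_⟩
      rcases eq_or_ne i 0 with rfl | h0
      · unfold pv
        rw [dif_neg (by omega), if_pos rfl, dif_pos (by omega)]
        exact Or.inl (Or.inl ⟨rfl, rfl⟩)
      rcases eq_or_ne i (k - 1) with rfl | h1
      · unfold pv
        rw [dif_pos (by omega), dif_neg (by omega), if_neg (by omega)]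
        refine Or.inr (Or.inr ⟨?_, rfl⟩)
        simp only [Fin.val_mk]
        omega
      · unfold pv
        rw [dif_pos (by omega), dif_pos (by omega)]
        refine Or.inl ⟨rfl, ?_⟩
        simp only [Fin.val_mk]
        omega
    unfold pe at hx
    rw [Sym2.eq_iff] at hx
    rcases hx with ⟨h1, h2⟩ | ⟨h1, h2⟩
    · rw [← h1, ← h2]; exact hadj
    · rw [← h1, ← h2]; exact hadj.symm

lemma reachable_const_of_color {α : Type*} {H : SimpleGraph α} {c : α → Bool}
    (hc : ∀ x y, H.Adj x y → c x = c y) {x y : α} (h : H.Reachable x y) : c x = c y := by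
  obtain ⟨w⟩ := h
  induction w with
  | nil => rfl
  | cons h _ ih => exact (hc _ _ h).trans ih

lemma pendpts_ne (hp : ∀ e : G.edgeSet, s((p e).1, (p e).2) = (e : Sym2 V)) (e : G.edgeSet) :
    (p e).1 ≠ (p e).2 := by
  intro h
  have := G.not_isDiag_of_mem_edgeSet e.2
  rw [← hp e] at this
  exact this (by rw [h]; exact Sym2.mk_isDiag_iff.2 rfl)

lemma fiber_isForest [Fintype V] (hk : 2 ≤ k)
    (hp : ∀ e : G.edgeSet, s((p e).1, (p e).2) = (e : Sym2 V))
    {A : Finset (Sym2 V)}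
    (hacyc : (SimpleGraph.fromEdgeSet (A : Set (Sym2 V))).IsAcyclic)
    {A' : Finset (Sym2 (V ⊕ (G.edgeSet × Fin (k - 1))))}
    (hsub : A' ⊆ (stretchGraph G k p).edgeFinset)
    (hall : ∀ e : G.edgeSet, pathEdges G k hk p e ⊆ A' ↔ (e : Sym2 V) ∈ A) :
    (SimpleGraph.fromEdgeSet (A' : Set (Sym2 (V ⊕ (G.edgeSet × Fin (k - 1)))))).IsAcyclic := by
  classical
  have hne := pendpts_ne hp
  have hmem : ∀ x ∈ A', ∃ f : G.edgeSet, ∃ l, l < k ∧ pe G k p f l = x := by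
    intro x hx
    have hx' := hsub hx
    rw [stretch_edgeFinset hk hp, Finset.mem_biUnion] at hx'
    obtain ⟨f, -, hf⟩ := hx'
    rw [pathEdges_eq hk, Finset.mem_image] at hf
    obtain ⟨l, hl, hfl⟩ := hf
    exact ⟨f, l, Finset.mem_range.1 hl, hfl⟩
  rw [SimpleGraph.isAcyclic_iff_forall_adj_isBridge]
  intro x y hxy
  rw [SimpleGraph.fromEdgeSet_adj] at hxy
  rw [SimpleGraph.isBridge_iff]
  intro hreach
  obtain ⟨e, j, hj, hxyeq⟩ := hmem _ hxy.1
  -- reduce to the existence of a suitable 2-colouring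
  suffices hgood : ∃ c : V ⊕ (G.edgeSet × Fin (k - 1)) → Bool,
      (∀ f : G.edgeSet, ∀ l, l < k → pe G k p f l ∈ A' → pe G k p f l ≠ pe G k p e j →
        c (pv G k p f l) = c (pv G k p f (l + 1))) ∧
      c (pv G k p e j) ≠ c (pv G k p e (j + 1)) by
    obtain ⟨c, hmono, hdiff⟩ := hgood
    have hmono' : ∀ u v, ((SimpleGraph.fromEdgeSet (A' : Set _)) \
        SimpleGraph.fromEdgeSet {s(x, y)}).Adj u v → c u = c v := by
      intro u v huv
      rw [SimpleGraph.sdiff_adj, SimpleGraph.fromEdgeSet_adj, SimpleGraph.fromEdgeSet_adj] at huv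
      obtain ⟨⟨h1, h2⟩, h3⟩ := huv
      have h4 : s(u, v) ≠ s(x, y) := fun hh => h3 ⟨by rw [hh]; exact Set.mem_singleton _, h2⟩
      obtain ⟨f, l, hl, hfl⟩ := hmem _ h1
      have hcc := hmono f l hl (by rw [hfl]; exact h1) (by rw [hfl, hxyeq]; exact h4)
      unfold pe at hfl
      rcases Sym2.eq_iff.1 hfl with ⟨h5, h6⟩ | ⟨h5, h6⟩
      · rw [h5, h6] at hcc; exact hcc
      · rw [h5, h6] at hcc; exact hcc.symm
    have hcxy := reachable_const_of_color hmono' hreach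
    unfold pe at hxyeq
    rcases Sym2.eq_iff.1 hxyeq with ⟨h5, h6⟩ | ⟨h5, h6⟩
    · rw [h5, h6] at hdiff; exact hdiff hcxy
    · rw [h5, h6] at hdiff; exact hdiff hcxy.symm
  by_cases heA : (e : Sym2 V) ∈ A
  ·
    -- the whole path of `e` lies in `A'`; use a bridge colouring of the base graph
    have hc02 : ¬ (SimpleGraph.fromEdgeSet (A : Set (Sym2 V)) \
        SimpleGraph.fromEdgeSet {(e : Sym2 V)}).Reachable (p e).1 (p e).2 := by
      have hadj : (SimpleGraph.fromEdgeSet (A : Set (Sym2 V))).Adj (p e).1 (p e).2 := by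
        rw [SimpleGraph.fromEdgeSet_adj]
        exact ⟨by rw [hp e]; exact heA, hne e⟩
      have hbr := SimpleGraph.isAcyclic_iff_forall_adj_isBridge.1 hacyc hadj
      rw [SimpleGraph.isBridge_iff] at hbr
      rw [← hp e]
      exact hbr
    set H₀ := SimpleGraph.fromEdgeSet (A : Set (Sym2 V)) \
        SimpleGraph.fromEdgeSet {(e : Sym2 V)} with hH₀
    set c0 : V → Bool := fun v => decide (H₀.Reachable (p e).1 v) with hc0def
    have hc01 : c0 (p e).1 = true := decide_eq_true (SimpleGraph.Reachable.refl _)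
    have hc02' : c0 (p e).2 = false := decide_eq_false hc02
    have hc0adj : ∀ u v : V, H₀.Adj u v → c0 u = c0 v := by
      intro u v huv
      simp only [hc0def, decide_eq_decide]
      exact ⟨fun h => h.trans huv.reachable, fun h => h.trans huv.symm.reachable⟩
    have hc0edge : ∀ f : G.edgeSet, (f : Sym2 V) ∈ A → f ≠ e → c0 (p f).1 = c0 (p f).2 := by
      intro f hfA hfe
      refine hc0adj _ _ ?_
      rw [hH₀, SimpleGraph.sdiff_adj, SimpleGraph.fromEdgeSet_adj, SimpleGraph.fromEdgeSet_adj]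
      refine ⟨⟨by rw [hp f]; exact hfA, hne f⟩, ?_⟩
      rintro ⟨hmem', -⟩
      rw [hp f, Set.mem_singleton_iff] at hmem'
      exact hfe (Subtype.coe_injective hmem')
    -- choose a cut position for every edge of `G`
    have hd : ∀ f : G.edgeSet, ∃ df : ℕ, df < k ∧ ((f : Sym2 V) ∈ A → df = j) ∧
        ((f : Sym2 V) ∉ A → pe G k p f df ∉ A') := by
      intro f
      by_cases hfA : (f : Sym2 V) ∈ A
      · exact ⟨j, hj, fun _ => rfl, fun h => absurd hfA h⟩
      · have hns : ¬ pathEdges G k hk p f ⊆ A' := fun h => hfA ((hall f).1 h)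
        rw [Finset.not_subset] at hns
        obtain ⟨z, hz1, hz2⟩ := hns
        rw [pathEdges_eq hk, Finset.mem_image] at hz1
        obtain ⟨l, hl, rfl⟩ := hz1
        exact ⟨l, Finset.mem_range.1 hl, fun h => absurd h hfA, fun _ => hz2⟩
    choose d hdlt hdA hdnA using hd
    refine ⟨Sum.elim c0 (fun ft => if ft.2.val + 1 ≤ d ft.1 then c0 (p ft.1).1 else c0 (p ft.1).2),
      ?_, ?_⟩
    · have hcol : ∀ (f : G.edgeSet) (i : ℕ), i ≤ k →
          (Sum.elim c0 (fun ft : G.edgeSet × Fin (k-1) =>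
            if ft.2.val + 1 ≤ d ft.1 then c0 (p ft.1).1 else c0 (p ft.1).2) (pv G k p f i))
          = if i ≤ d f then c0 (p f).1 else c0 (p f).2 := by
        intro f i hik
        have hdf := hdlt f
        unfold pv
        split_ifs <;> simp only [Sum.elim_inr, Sum.elim_inl, Fin.val_mk] <;>
          (try split_ifs) <;> first | rfl | (exfalso; omega)
      intro f l hl hin hne2
      rw [hcol f l (by omega), hcol f (l + 1) (by omega)]
      split_ifs with h1 h2
      · rfl
      · -- l = d f
        have hlde : l = d f := by omega
        by_cases hfA : (f : Sym2 V) ∈ A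
        · by_cases hfe : f = e
          · subst hfe
            exact absurd (by rw [hlde, hdA f hfA]) hne2
          · exact hc0edge f hfA hfe
        · exact absurd hin (by rw [hlde]; exact hdnA f hfA)
      · omega
      · rfl
    · have hcol : ∀ (i : ℕ), i ≤ k →
          (Sum.elim c0 (fun ft : G.edgeSet × Fin (k-1) =>
            if ft.2.val + 1 ≤ d ft.1 then c0 (p ft.1).1 else c0 (p ft.1).2) (pv G k p e i))
          = if i ≤ d e then c0 (p e).1 else c0 (p e).2 := by
        intro i hik
        have hdf := hdlt e
        unfold pv
        split_ifs <;> simp only [Sum.elim_inr, Sum.elim_inl, Fin.val_mk] <;>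
          (try split_ifs) <;> first | rfl | (exfalso; omega)
      rw [hcol j (by omega), hcol (j + 1) (by omega), hdA e heA,
        if_pos (le_refl j), if_neg (by omega), hc01, hc02']
      simp

  · -- the path of `e` misses some edge `pe e j'` of `A'`; colour the segment between them
    have hnsub : ¬ pathEdges G k hk p e ⊆ A' := fun h => heA ((hall e).1 h)
    rw [Finset.not_subset] at hnsub
    obtain ⟨z, hz1, hz2⟩ := hnsub
    rw [pathEdges_eq hk, Finset.mem_image] at hz1
    obtain ⟨j', hj', rfl⟩ := hz1
    rw [Finset.mem_range] at hj'
    have hjj' : j ≠ j' := fun h => hz2 (by rw [← h, hxyeq]; exact hxy.1)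
    refine ⟨Sum.elim (fun _ => false)
      (fun ft => decide (ft.1 = e ∧ min j j' ≤ ft.2.val ∧ ft.2.val + 1 ≤ max j j')), ?_, ?_⟩
    · -- monochromatic on all other edges
      have hcol : ∀ (f : G.edgeSet) (i : ℕ), i ≤ k →
          (Sum.elim (fun _ => false)
            (fun ft : G.edgeSet × Fin (k-1) =>
              decide (ft.1 = e ∧ min j j' ≤ ft.2.val ∧ ft.2.val + 1 ≤ max j j'))
            (pv G k p f i))
          = decide (f = e ∧ min j j' + 1 ≤ i ∧ i ≤ max j j') := by
        intro f i hik
        unfold pv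
        split_ifs with h1 h2
        · simp only [Sum.elim_inr, decide_eq_decide, Fin.val_mk]
          constructor <;> rintro ⟨rfl, ha, hb⟩ <;> exact ⟨rfl, by omega, by omega⟩
        · simp only [Sum.elim_inl]
          symm
          simp only [decide_eq_false_iff_not]
          rintro ⟨-, ha, -⟩
          omega
        · simp only [Sum.elim_inl]
          symm
          simp only [decide_eq_false_iff_not]
          rintro ⟨-, -, hb⟩
          omega
      intro f l hl hin hne2
      rw [hcol f l (by omega), hcol f (l + 1) (by omega), decide_eq_decide]
      by_cases hfe : f = e
      · subst hfe
        have hlj : l ≠ j := fun h => hne2 (by rw [h])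
        have hlj' : l ≠ j' := fun h => hz2 (by rw [← h]; exact hin)
        constructor <;> rintro ⟨-, ha, hb⟩ <;> exact ⟨rfl, by omega, by omega⟩
      · constructor <;> rintro ⟨h, -, -⟩ <;> exact absurd h hfe
    · -- the two endpoints of `pe e j` get different colours
      have hcol : ∀ (i : ℕ), i ≤ k →
          (Sum.elim (fun _ => false)
            (fun ft : G.edgeSet × Fin (k-1) =>
              decide (ft.1 = e ∧ min j j' ≤ ft.2.val ∧ ft.2.val + 1 ≤ max j j'))
            (pv G k p e i))
          = decide (min j j' + 1 ≤ i ∧ i ≤ max j j') := by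
        intro i hik
        unfold pv
        split_ifs with h1 h2
        · simp only [Sum.elim_inr, decide_eq_decide, Fin.val_mk, true_and]
          constructor <;> rintro ⟨ha, hb⟩ <;> exact ⟨by omega, by omega⟩
        · simp only [Sum.elim_inl]
          symm
          simp only [decide_eq_false_iff_not]
          rintro ⟨ha, -⟩
          omega
        · simp only [Sum.elim_inl]
          symm
          simp only [decide_eq_false_iff_not]
          rintro ⟨-, hb⟩
          omega
      rw [hcol j (by omega), hcol (j + 1) (by omega), ne_eq, decide_eq_decide]
      intro hiff
      omega


end Stretch

lemma mem_stretchProj {V : Type*} [Fintype V] {G : SimpleGraph V} {k : ℕ} (hk : 2 ≤ k)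
    (p : G.edgeSet → V × V) (A' : Finset (Sym2 (V ⊕ (G.edgeSet × Fin (k - 1)))))
    (q : Sym2 V) :
    q ∈ stretchProj G k hk p A' ↔
      ∃ e : G.edgeSet, pathEdges G k hk p e ⊆ A' ∧ (e : Sym2 V) = q := by
  simp only [stretchProj, Finset.mem_image, Finset.bind_def, Finset.pure_def,
    Finset.mem_biUnion, Finset.mem_singleton, Finset.mem_filter, Finset.mem_univ, true_and,
    id_eq, exists_eq_right, Finset.mem_sup]
  tauto

/-- Let `G` have `m` edges, let `k ≥ 2`, let `G'` be the `k`-stretch of `G`, and let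
`A ⊆ E(G)` be acyclic.  Then, as polynomials in `w`,
`Σ_{A' ∈ 𝔽(G'), φ(A') = A} w^{|A'|} = w^{k·|A|} · ((w+1)^k − w^k)^{m−|A|}`. -/
theorem stretch_fiber_generating_polynomial {V : Type*} [Fintype V] (G : SimpleGraph V)
    (k : ℕ) (hk : 2 ≤ k) (p : G.edgeSet → V × V)
    (hp : ∀ e : G.edgeSet, s((p e).1, (p e).2) = (e : Sym2 V))
    (A : Finset (Sym2 V)) (hA : A ⊆ G.edgeFinset)
    (hacyc : (SimpleGraph.fromEdgeSet (A : Set (Sym2 V))).IsAcyclic) :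
    ∑ A' ∈ (stretchGraph G k p).edgeFinset.powerset.filter
        (fun A' => IsForestEdgeSet A' ∧ stretchProj G k hk p A' = A),
      (Polynomial.X : Polynomial ℤ) ^ A'.card
    = Polynomial.X ^ (k * A.card) *
        ((Polynomial.X + 1) ^ k - Polynomial.X ^ k) ^ (G.edgeFinset.card - A.card) := by
  classical
  have hne := pendpts_ne (G := G) hp
  set P : G.edgeSet → Finset (Sym2 (V ⊕ (G.edgeSet × Fin (k - 1)))) :=
    fun e => pathEdges G k hk p e with hP
  -- Step 1: rewrite the filter
  have hfilter : (stretchGraph G k p).edgeFinset.powerset.filter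
      (fun A' => IsForestEdgeSet A' ∧ stretchProj G k hk p A' = A)
      = (stretchGraph G k p).edgeFinset.powerset.filter
      (fun A' => ∀ e : G.edgeSet, (P e ⊆ A' ↔ (e : Sym2 V) ∈ A)) := by
    apply Finset.filter_congr
    intro A' hA'
    rw [Finset.mem_powerset] at hA'
    constructor
    · rintro ⟨-, hproj⟩ e
      constructor
      · intro hsub2
        rw [← hproj, mem_stretchProj]
        exact ⟨e, hsub2, rfl⟩
      · intro heA
        rw [← hproj, mem_stretchProj] at heA
        obtain ⟨f, hf, hfe⟩ := heA
        have hfeq : f = e := Subtype.coe_injective hfe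
        subst hfeq
        exact hf
    · intro hsuff
      have hproj : stretchProj G k hk p A' = A := by
        ext q
        rw [mem_stretchProj]
        constructor
        · rintro ⟨f, hf, rfl⟩
          exact (hsuff f).1 hf
        · intro hq
          have hqe : q ∈ G.edgeSet := by rw [← SimpleGraph.mem_edgeFinset]; exact hA hq
          exact ⟨⟨q, hqe⟩, (hsuff ⟨q, hqe⟩).2 hq, rfl⟩
      exact ⟨fiber_isForest hk hp hacyc hA' hsuff, hproj⟩
  rw [hfilter]
  -- Step 2: transform the sum into a sum over products of independent choices
  set t : G.edgeSet → Finset (Finset (Sym2 (V ⊕ (G.edgeSet × Fin (k - 1))))) :=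
    fun e => (P e).powerset.filter (fun T => P e ⊆ T ↔ (e : Sym2 V) ∈ A) with ht
  have hsum : ∑ A' ∈ (stretchGraph G k p).edgeFinset.powerset.filter
      (fun A' => ∀ e : G.edgeSet, (P e ⊆ A' ↔ (e : Sym2 V) ∈ A)),
      (Polynomial.X : Polynomial ℤ) ^ A'.card
      = ∑ g ∈ Fintype.piFinset t, ∏ e : G.edgeSet, (Polynomial.X : Polynomial ℤ) ^ (g e).card := by
    refine Finset.sum_nbij' (fun A' e => A' ∩ P e)
      (fun g => Finset.univ.biUnion (fun e => g e)) ?_ ?_ ?_ ?_ ?_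
    · intro A' hA'
      rw [Finset.mem_filter, Finset.mem_powerset] at hA'
      rw [Fintype.mem_piFinset]
      intro e
      rw [ht, Finset.mem_filter, Finset.mem_powerset]
      refine ⟨Finset.inter_subset_right, ?_⟩
      rw [Finset.subset_inter_iff]
      simp only [Finset.Subset.refl, and_true]
      exact hA'.2 e
    · intro g hg
      rw [Fintype.mem_piFinset] at hg
      have hge : ∀ e, g e ⊆ P e ∧ (P e ⊆ g e ↔ (e : Sym2 V) ∈ A) := by
        intro e
        have := hg e
        rw [ht, Finset.mem_filter, Finset.mem_powerset] at this
        exact this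
      rw [Finset.mem_filter, Finset.mem_powerset]
      constructor
      · refine Finset.biUnion_subset.2 fun e _ => ?_
        refine (hge e).1.trans ?_
        rw [stretch_edgeFinset hk hp]
        exact Finset.subset_biUnion_of_mem _ (Finset.mem_univ e)
      · intro e
        constructor
        · intro hPe
          by_contra heA
          have hns : ¬ P e ⊆ g e := fun h => heA (((hge e).2).1 h)
          rw [Finset.not_subset] at hns
          obtain ⟨z, hz1, hz2⟩ := hns
          have := hPe hz1
          rw [Finset.mem_biUnion] at this
          obtain ⟨f, -, hzf⟩ := this
          have hze : e = f := by
            by_contra hef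
            exact (Finset.disjoint_left.1 (disjoint_pathEdges hk hef)) hz1 ((hge f).1 hzf)
          exact hz2 (hze ▸ hzf)
        · intro heA
          exact (((hge e).2).2 heA).trans (Finset.subset_biUnion_of_mem _ (Finset.mem_univ e))
    · intro A' hA'
      rw [Finset.mem_filter, Finset.mem_powerset] at hA'
      ext z
      rw [Finset.mem_biUnion]
      constructor
      · rintro ⟨f, -, hz⟩
        exact (Finset.mem_inter.1 hz).1
      · intro hz
        have := hA'.1 hz
        rw [stretch_edgeFinset hk hp, Finset.mem_biUnion] at this
        obtain ⟨f, -, hzf⟩ := this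
        exact ⟨f, Finset.mem_univ _, Finset.mem_inter.2 ⟨hz, hzf⟩⟩
    · intro g hg
      rw [Fintype.mem_piFinset] at hg
      have hge : ∀ e, g e ⊆ P e := by
        intro e
        have := hg e
        rw [ht, Finset.mem_filter, Finset.mem_powerset] at this
        exact this.1
      funext e
      ext z
      rw [Finset.mem_inter, Finset.mem_biUnion]
      constructor
      · rintro ⟨⟨f, -, hzf⟩, hzP⟩
        have hef : e = f := by
          by_contra hef
          exact (Finset.disjoint_left.1 (disjoint_pathEdges hk hef)) hzP (hge f hzf)
        exact hef ▸ hzf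
      · intro hz
        exact ⟨⟨e, Finset.mem_univ _, hz⟩, hge e hz⟩
    · intro A' hA'
      rw [Finset.mem_filter, Finset.mem_powerset] at hA'
      have hcard : A'.card = ∑ e : G.edgeSet, (A' ∩ P e).card := by
        have huni : A' = Finset.univ.biUnion (fun e => A' ∩ P e) := by
          ext z
          rw [Finset.mem_biUnion]
          constructor
          · intro hz
            have := hA'.1 hz
            rw [stretch_edgeFinset hk hp, Finset.mem_biUnion] at this
            obtain ⟨f, -, hzf⟩ := this
            exact ⟨f, Finset.mem_univ _, Finset.mem_inter.2 ⟨hz, hzf⟩⟩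
          · rintro ⟨f, -, hz⟩
            exact (Finset.mem_inter.1 hz).1
        conv_lhs => rw [huni]
        refine Finset.card_biUnion ?_
        intro e _ f _ hef
        exact Finset.disjoint_of_subset_left Finset.inter_subset_right
          (Finset.disjoint_of_subset_right Finset.inter_subset_right
            (disjoint_pathEdges hk hef))
      rw [hcard, ← Finset.prod_pow_eq_pow_sum]
  have hprod := Finset.prod_univ_sum t
    (fun (_ : G.edgeSet) (T : Finset (Sym2 (V ⊕ (G.edgeSet × Fin (k - 1))))) =>
      (Polynomial.X : Polynomial ℤ) ^ T.card)
  rw [hsum, ← hprod]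
  -- Step 3: evaluate the product
  rw [← Finset.prod_filter_mul_prod_filter_not Finset.univ
    (fun e : G.edgeSet => (e : Sym2 V) ∈ A)]
  have hsum1 : ∀ e : G.edgeSet, (e : Sym2 V) ∈ A →
      ∑ T ∈ t e, (Polynomial.X : Polynomial ℤ) ^ T.card = Polynomial.X ^ k := by
    intro e heA
    have : t e = {P e} := by
      ext T
      rw [ht, Finset.mem_filter, Finset.mem_powerset, Finset.mem_singleton]
      constructor
      · rintro ⟨h1, h2⟩
        exact Finset.Subset.antisymm h1 (h2.2 heA)
      · rintro rfl
        exact ⟨Finset.Subset.refl _, by simp [heA]⟩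
    rw [this, Finset.sum_singleton, hP, card_pathEdges hk (hne e)]
  have hsum2 : ∀ e : G.edgeSet, (e : Sym2 V) ∉ A →
      ∑ T ∈ t e, (Polynomial.X : Polynomial ℤ) ^ T.card
        = (Polynomial.X + 1) ^ k - Polynomial.X ^ k := by
    intro e heA
    have het : t e = (P e).powerset.erase (P e) := by
      ext T
      rw [ht, Finset.mem_filter, Finset.mem_erase, Finset.mem_powerset]
      constructor
      · rintro ⟨h1, h2⟩
        exact ⟨fun hT => heA (h2.1 (by rw [hT])), h1⟩
      · rintro ⟨h1, h2⟩
        exact ⟨h2, ⟨fun h3 => absurd (Finset.Subset.antisymm h2 h3) h1,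
          fun h3 => absurd h3 heA⟩⟩
    rw [het, Finset.sum_erase_eq_sub (Finset.mem_powerset.2 (Finset.Subset.refl _))]
    have hbinom : ∑ T ∈ (P e).powerset, (Polynomial.X : Polynomial ℤ) ^ T.card
        = (Polynomial.X + 1) ^ k := by
      have := Finset.prod_add (fun _ => (Polynomial.X : Polynomial ℤ)) (fun _ => 1) (P e)
      simp only [Finset.prod_const, Finset.prod_const_one, mul_one, one_pow] at this
      rw [← this, card_pathEdges hk (hne e)]
    rw [hbinom, card_pathEdges hk (hne e)]
  rw [Finset.prod_congr rfl (fun e he => hsum1 e (Finset.mem_filter.1 he).2),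
    Finset.prod_congr rfl (fun e he => hsum2 e (Finset.mem_filter.1 he).2),
    Finset.prod_const, Finset.prod_const]
  have hcard1 : (Finset.univ.filter (fun e : G.edgeSet => (e : Sym2 V) ∈ A)).card = A.card := by
    refine Finset.card_bij (fun e _ => (e : Sym2 V)) ?_ ?_ ?_
    · intro e he
      exact (Finset.mem_filter.1 he).2
    · intro e _ f _ h
      exact Subtype.coe_injective h
    · intro q hq
      have hqe : q ∈ G.edgeSet := by rw [← SimpleGraph.mem_edgeFinset]; exact hA hq
      exact ⟨⟨q, hqe⟩, Finset.mem_filter.2 ⟨Finset.mem_univ _, hq⟩, rfl⟩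
  have hcard2 : (Finset.univ.filter (fun e : G.edgeSet => ¬ (e : Sym2 V) ∈ A)).card
      = G.edgeFinset.card - A.card := by
    have h := Finset.card_filter_add_card_filter_not
      (s := (Finset.univ : Finset G.edgeSet)) (p := fun e => (e : Sym2 V) ∈ A)
    have huniv : (Finset.univ : Finset G.edgeSet).card = G.edgeFinset.card := by
      rw [SimpleGraph.edgeFinset_card, Finset.card_univ]
    omega
  rw [hcard1, hcard2, ← pow_mul]
end

section
/- Let G be a finite bipartite simple graph with bipartition of its vertex set into parts V and U (every edge has one endpoint in V and one in U). Then the number of independent sets of G equals the number of Boolean assignments σ : V ∪ U → {false, true} such that for every edge {v,u} of G with v ∈ V and u ∈ U, σ(v) = true implies σ(u) = true. -/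
open scoped Classical

/-- Let `G` be a finite bipartite simple graph with bipartition `(SV, SU)` of its vertex
set (every edge has one endpoint in `SV` and one in `SU`).  Then the number of independent
sets of `G` equals the number of Boolean assignments `σ` on the vertices such that for
every edge `{v, u}` with `v ∈ SV` and `u ∈ SU`, `σ v = true` implies `σ u = true`. -/
theorem card_independent_sets_eq_card_imp2sat_assignments {W : Type*} [Fintype W]
    (G : SimpleGraph W) (SV SU : Finset W)
    (hdisj : Disjoint SV SU) (hcover : SV ∪ SU = Finset.univ)
    (hbip : ∀ x y, G.Adj x y → (x ∈ SV ∧ y ∈ SU) ∨ (x ∈ SU ∧ y ∈ SV)) :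
    ((Finset.univ : Finset (Finset W)).filter
        (fun I => ∀ x ∈ I, ∀ y ∈ I, ¬ G.Adj x y)).card
    = ((Finset.univ : Finset (W → Bool)).filter
        (fun σ => ∀ x y, G.Adj x y → x ∈ SV → y ∈ SU →
          (σ x = true → σ y = true))).card := by
  classical
  apply Finset.card_bij'
    (fun I _ => fun x => if x ∈ SV then decide (x ∈ I) else decide (x ∉ I))
    (fun σ _ => Finset.univ.filter (fun x => if x ∈ SV then σ x = true else σ x = false))
  · intro I hI
    simp only [Finset.mem_filter, Finset.mem_univ, true_and] at hI ⊢
    intro x y hxy hxV hyU hx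
    have hxU : x ∉ SU := fun h => (Finset.disjoint_left.mp hdisj hxV) h
    have hyV : y ∉ SV := fun h => (Finset.disjoint_left.mp hdisj h) hyU
    simp only [if_pos hxV, decide_eq_true_eq] at hx
    simp only [if_neg hyV, decide_eq_true_eq]
    exact fun hy => hI x hx y hy hxy
  · intro σ hσ
    simp only [Finset.mem_filter, Finset.mem_univ, true_and] at hσ ⊢
    intro x hx y hy hxy
    rcases hbip x y hxy with ⟨hxV, hyU⟩ | ⟨hxU, hyV⟩
    · have hyV : y ∉ SV := fun h => (Finset.disjoint_left.mp hdisj h) hyU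
      rw [if_pos hxV] at hx
      rw [if_neg hyV] at hy
      exact absurd (hσ x y hxy hxV hyU hx) (by simp [hy])
    · have hxV : x ∉ SV := fun h => (Finset.disjoint_left.mp hdisj h) hxU
      rw [if_neg hxV] at hx
      rw [if_pos hyV] at hy
      exact absurd (hσ y x hxy.symm hyV hxU hy) (by simp [hx])
  · intro I hI
    ext x
    simp only [Finset.mem_filter, Finset.mem_univ, true_and]
    by_cases hxV : x ∈ SV
    · simp [hxV]
    · have hxU : x ∈ SU := by
        have := Finset.mem_univ x
        rw [← hcover, Finset.mem_union] at this
        tauto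
      simp [hxV]
  · intro σ hσ
    funext x
    by_cases hxV : x ∈ SV
    · simp [hxV]
    · simp only [if_neg hxV, Finset.mem_filter, Finset.mem_univ, true_and]
      cases h : σ x <;> simp [h, hxV]
end
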